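/- arXiv:1809.02566 — 4 statements merged into one kernel-verified Lean document; each statement's English description precedes it below -/
import Mathlib

section
/- Let ζ > 0 and λ ∈ ℂ. Then for every t ≥ 0, the function u(t) := E_ζ(λ t^ζ) satisfies the Volterra integral equation u(t) = 1 + λ ∫_0^t g_ζ(t-s) u(s) ds, where g_ζ(s) = s^{ζ-1}/Γ(ζ). -/
open Complex Real MeasureTheory Set Nat

private lemma summable_pow_div_Gamma {ζ c : ℝ} (hζ : 0 < ζ) (hc : 1 ≤ c) {x : ℝ} (hx : 0 ≤ x) :
    Summable (fun k : ℕ => x ^ k / Real.Gamma (ζ * k + c)) := by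
  set a : ℝ := (x + 1) ^ (2 / ζ) with ha_def
  have ha1 : 1 ≤ a := Real.one_le_rpow (by linarith) (by positivity)
  obtain ⟨N, hN⟩ : ∃ N : ℕ, ∀ n ≥ N, a ^ n ≤ n ! := by
    obtain ⟨N, hN⟩ := Filter.eventually_atTop.mp
      ((FloorSemiring.tendsto_pow_div_factorial_atTop a).eventually
        (eventually_le_nhds (show (0:ℝ) < 1 by norm_num)))
    refine ⟨N, fun n hn => ?_⟩
    have h1 := hN n hn
    have h2 : (0:ℝ) < n ! := by positivity
    calc a ^ n = a ^ n / n ! * n ! := by field_simp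
      _ ≤ 1 * n ! := mul_le_mul_of_nonneg_right h1 h2.le
      _ = n ! := one_mul _
  set r : ℝ := x / (x + 1) with hr_def
  have hr0 : 0 ≤ r := by positivity
  have hr1 : r < 1 := by
    rw [hr_def, div_lt_one (by linarith)]; linarith
  -- key pointwise bound
  have key : ∀ k : ℕ, 2 * N + 4 ≤ ζ * k → x ^ k / Real.Gamma (ζ * k + c) ≤ r ^ k := by
    intro k hk
    set n : ℕ := ⌊ζ * k⌋₊ with hn_def
    have hζk : (0:ℝ) ≤ ζ * k := by positivity
    have hn1 : (n : ℝ) ≤ ζ * k := Nat.floor_le hζk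
    have hn2 : ζ * k - 1 < (n : ℝ) := Nat.sub_one_lt_floor _
    have hNn : N ≤ n := by
      have : (N : ℝ) < n := by
        have hN0 : (0:ℝ) ≤ N := Nat.cast_nonneg N
        linarith
      exact_mod_cast this.le
    have hG : (x + 1) ^ k ≤ Real.Gamma (ζ * k + c) := by
      have e1 : (x + 1) ^ k = (x + 1) ^ ((2 / ζ) * (ζ * k / 2)) := by
        rw [show (2 / ζ) * (ζ * k / 2) = (k : ℝ) by field_simp,
          Real.rpow_natCast]
      have e2 : (x + 1) ^ ((2 / ζ) * (ζ * k / 2)) = a ^ (ζ * k / 2) := by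
        rw [Real.rpow_mul (by linarith)]
      have e3 : a ^ (ζ * k / 2) ≤ a ^ ((n : ℝ)) := by
        apply Real.rpow_le_rpow_of_exponent_le ha1
        nlinarith
      have e4 : a ^ ((n : ℝ)) = a ^ n := Real.rpow_natCast a n
      have e5 : (n ! : ℝ) = Real.Gamma (n + 1) := (Real.Gamma_nat_eq_factorial n).symm
      have e6 : Real.Gamma ((n : ℝ) + 1) ≤ Real.Gamma (ζ * k + c) := by
        apply Real.Gamma_strictMonoOn_Ici.monotoneOn
        · simp only [Set.mem_Ici]; nlinarith
        · simp only [Set.mem_Ici]; linarith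
        · linarith
      calc (x + 1) ^ k = a ^ (ζ * k / 2) := by rw [e1, e2]
        _ ≤ a ^ ((n:ℝ)) := e3
        _ = a ^ n := e4
        _ ≤ n ! := hN n hNn
        _ = Real.Gamma ((n:ℝ) + 1) := by exact_mod_cast e5
        _ ≤ Real.Gamma (ζ * k + c) := e6
    have hx1k : (0:ℝ) < (x + 1) ^ k := by positivity
    calc x ^ k / Real.Gamma (ζ * k + c) ≤ x ^ k / (x + 1) ^ k := by gcongr
      _ = r ^ k := by rw [hr_def, div_pow]
  -- choose a threshold
  set k₀ : ℕ := ⌈(2 * N + 4) / ζ⌉₊ with hk₀_def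
  have hth : ∀ k : ℕ, k₀ ≤ k → 2 * N + 4 ≤ ζ * k := by
    intro k hk
    have h1 : (2 * N + 4) / ζ ≤ (k₀ : ℝ) := Nat.le_ceil _
    have h2 : (k₀ : ℝ) ≤ k := by exact_mod_cast hk
    rw [div_le_iff₀ hζ] at h1
    calc (2 * N + 4 : ℝ) ≤ k₀ * ζ := h1
      _ ≤ k * ζ := by gcongr
      _ = ζ * k := mul_comm _ _
  rw [← summable_nat_add_iff k₀]
  refine Summable.of_nonneg_of_le (fun k => by positivity) (fun k => ?_)
    ((summable_nat_add_iff k₀).mpr (summable_geometric_of_lt_one hr0 hr1))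
  exact key (k + k₀) (hth _ (Nat.le_add_left _ _))

private lemma beta_integrableOn {a b t : ℝ} (ha : 1 ≤ a) (hb : 0 < b) (ht : 0 < t) :
    IntegrableOn (fun s : ℝ => s ^ (a - 1) * (t - s) ^ (b - 1)) (Ioc 0 t) := by
  have h1 : IntervalIntegrable (fun x : ℝ => x ^ (b - 1)) volume 0 t :=
    intervalIntegral.intervalIntegrable_rpow' (by linarith)
  have h2 : IntegrableOn (fun s : ℝ => (t - s) ^ (b - 1)) (Ioc 0 t) := by
    have h := (h1.comp_sub_left t).symm
    simp only [sub_self, sub_zero] at h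
    rw [intervalIntegrable_iff_integrableOn_Ioc_of_le ht.le] at h
    exact h
  refine Integrable.mono (h2.const_mul (t ^ (a - 1))) ?_ ?_
  · apply Measurable.aestronglyMeasurable
    fun_prop
  · filter_upwards [ae_restrict_mem measurableSet_Ioc] with s hs
    have hs0 : 0 < s := hs.1
    have hst : s ≤ t := hs.2
    have hts : 0 ≤ t - s := by linarith
    rw [Real.norm_of_nonneg (by positivity), Real.norm_of_nonneg (by positivity)]
    have h3 : s ^ (a - 1) ≤ t ^ (a - 1) := Real.rpow_le_rpow hs0.le hst (by linarith)
    exact mul_le_mul_of_nonneg_right h3 (Real.rpow_nonneg hts _)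

private lemma beta_integral_value {a b t : ℝ} (ha : 0 < a) (hb : 0 < b) (ht : 0 < t) :
    ∫ s in (0:ℝ)..t, s ^ (a - 1) * (t - s) ^ (b - 1) =
      Real.Gamma a * Real.Gamma b / Real.Gamma (a + b) * t ^ (a + b - 1) := by
  have hGab : Complex.Gamma ((a : ℂ) + b) ≠ 0 := by
    apply Complex.Gamma_ne_zero_of_re_pos
    simp only [Complex.add_re, Complex.ofReal_re]
    linarith
  have hbeta : Complex.betaIntegral a b =
      Complex.Gamma a * Complex.Gamma b / Complex.Gamma ((a:ℂ) + b) := by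
    rw [eq_div_iff hGab, mul_comm]
    exact (Complex.Gamma_mul_Gamma_eq_betaIntegral
      (by simpa using ha) (by simpa using hb)).symm
  have hscaled := Complex.betaIntegral_scaled (a : ℂ) (b : ℂ) ht
  have hcast : ((∫ s in (0:ℝ)..t, s ^ (a - 1) * (t - s) ^ (b - 1) : ℝ) : ℂ) =
      ∫ s in (0:ℝ)..t, (s : ℂ) ^ ((a:ℂ) - 1) * ((t : ℂ) - s) ^ ((b:ℂ) - 1) := by
    rw [← intervalIntegral.integral_ofReal]
    apply intervalIntegral.integral_congr
    intro s hs
    rw [Set.uIcc_of_le ht.le] at hs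
    have hs0 : 0 ≤ s := hs.1
    have hts : 0 ≤ t - s := by linarith [hs.2]
    push_cast
    rw [Complex.ofReal_cpow hs0, Complex.ofReal_cpow hts]
    push_cast
    ring
  have : ((∫ s in (0:ℝ)..t, s ^ (a - 1) * (t - s) ^ (b - 1) : ℝ) : ℂ) =
      ((Real.Gamma a * Real.Gamma b / Real.Gamma (a + b) * t ^ (a + b - 1) : ℝ) : ℂ) := by
    rw [hcast, hscaled, hbeta]
    rw [show ((a:ℂ) + b - 1) = (((a + b - 1 : ℝ)):ℂ) by push_cast; ring,
      ← Complex.ofReal_cpow ht.le]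
    rw [show ((a:ℂ) + (b:ℂ)) = ((a + b : ℝ) : ℂ) by push_cast; ring,
      Complex.Gamma_ofReal, Complex.Gamma_ofReal, Complex.Gamma_ofReal]
    push_cast
    ring
  exact_mod_cast this

/-- The Mittag-Leffler function `u(t) = E_ζ(λ t^ζ)` satisfies the Volterra
integral equation `u(t) = 1 + λ ∫_0^t g_ζ(t-s) u(s) ds`, where
`g_ζ(s) = s^{ζ-1}/Γ(ζ)`. -/
theorem mittagLeffler_volterra (ζ : ℝ) (hζ : 0 < ζ) (lam : ℂ) (t : ℝ) (ht : 0 ≤ t) :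
    (fun r : ℝ => ∑' k : ℕ, (lam * (r ^ ζ : ℝ)) ^ k / Complex.Gamma (ζ * k + 1)) t =
      1 + lam * ∫ s in (0:ℝ)..t,
        (((t - s) ^ (ζ - 1) / Real.Gamma ζ : ℝ) : ℂ) *
          (∑' k : ℕ, (lam * (s ^ ζ : ℝ)) ^ k / Complex.Gamma (ζ * k + 1)) := by
  have hGpos : ∀ y : ℝ, 0 < y → 0 < Real.Gamma y := fun y hy => Real.Gamma_pos_of_pos hy
  have hGC : ∀ k : ℕ, Complex.Gamma ((ζ:ℂ) * (k:ℂ) + 1) = ((Real.Gamma (ζ * k + 1) : ℝ) : ℂ) := by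
    intro k
    rw [show ((ζ:ℂ) * (k:ℂ) + 1) = ((ζ * k + 1 : ℝ) : ℂ) by push_cast; ring,
      Complex.Gamma_ofReal]
  have hterm : ∀ s : ℝ, 0 ≤ s → ∀ k : ℕ,
      (lam * ((s ^ ζ : ℝ) : ℂ)) ^ k / Complex.Gamma ((ζ:ℂ) * (k:ℂ) + 1)
        = lam ^ k * ((s ^ (ζ * k) : ℝ) : ℂ) / ((Real.Gamma (ζ * k + 1) : ℝ) : ℂ) := by
    intro s hs k
    rw [hGC, mul_pow, ← Complex.ofReal_pow, ← Real.rpow_natCast (s ^ ζ) k,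
      ← Real.rpow_mul hs]
  have hnorm : ∀ s : ℝ, 0 ≤ s → ∀ k : ℕ,
      ‖(lam * ((s ^ ζ : ℝ) : ℂ)) ^ k / Complex.Gamma ((ζ:ℂ) * (k:ℂ) + 1)‖
        = (‖lam‖ * s ^ ζ) ^ k / Real.Gamma (ζ * k + 1) := by
    intro s hs k
    rw [hterm s hs k, norm_div, norm_mul, norm_pow, Complex.norm_real, Complex.norm_real,
      Real.norm_of_nonneg (Real.rpow_nonneg hs _),
      Real.norm_of_nonneg (hGpos _ (by positivity)).le, mul_pow,
      ← Real.rpow_natCast (s ^ ζ) k, ← Real.rpow_mul hs]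
  have hsummC : ∀ s : ℝ, 0 ≤ s →
      Summable (fun k : ℕ => (lam * ((s ^ ζ : ℝ) : ℂ)) ^ k / Complex.Gamma ((ζ:ℂ) * (k:ℂ) + 1)) := by
    intro s hs
    apply Summable.of_norm
    exact ((summable_pow_div_Gamma hζ le_rfl
      (show (0:ℝ) ≤ ‖lam‖ * s ^ ζ by positivity)).congr (fun k => (hnorm s hs k).symm))
  rcases ht.eq_or_lt with h0 | ht'
  · -- t = 0
    subst h0
    rw [intervalIntegral.integral_same, mul_zero, add_zero]
    show (∑' k : ℕ, (lam * (((0:ℝ) ^ ζ : ℝ) : ℂ)) ^ k / Complex.Gamma ((ζ:ℂ) * (k:ℂ) + 1)) = 1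
    rw [Real.zero_rpow hζ.ne']
    rw [tsum_eq_single 0 (fun k hk => by
      simp [zero_pow hk])]
    simp [Complex.Gamma_one]
  -- t > 0
  set E : ℕ → ℝ → ℂ := fun k s =>
    (((t - s) ^ (ζ - 1) / Real.Gamma ζ : ℝ) : ℂ) *
      ((lam * ((s ^ ζ : ℝ) : ℂ)) ^ k / Complex.Gamma ((ζ:ℂ) * (k:ℂ) + 1)) with hE_def
  set Cg : ℕ → ℂ := fun k =>
    lam ^ k / (((Real.Gamma ζ : ℝ) : ℂ) * ((Real.Gamma (ζ * k + 1) : ℝ) : ℂ)) with hCg_def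
  have hGζ : (0:ℝ) < Real.Gamma ζ := hGpos ζ hζ
  have h_eq : ∀ k : ℕ, ∀ s ∈ Ioc (0:ℝ) t,
      E k s = Cg k * ((s ^ (ζ * k) * (t - s) ^ (ζ - 1) : ℝ) : ℂ) := by
    intro k s hs
    rw [hE_def]
    simp only []
    rw [hterm s hs.1.le k, hCg_def]
    push_cast
    ring
  have hbetaInt : ∀ k : ℕ,
      IntegrableOn (fun s : ℝ => s ^ (ζ * k) * (t - s) ^ (ζ - 1)) (Ioc 0 t) := by
    intro k
    have h := beta_integrableOn (a := ζ * k + 1) (b := ζ)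
      (le_add_of_nonneg_left (by positivity)) hζ ht'
    simpa using h
  have hval : ∀ k : ℕ, ∫ s in Ioc (0:ℝ) t, s ^ (ζ * k) * (t - s) ^ (ζ - 1)
      = Real.Gamma (ζ * k + 1) * Real.Gamma ζ / Real.Gamma (ζ * (k + 1) + 1)
          * t ^ (ζ * (k + 1)) := by
    intro k
    have h := beta_integral_value (a := ζ * k + 1) (b := ζ)
      (by positivity) hζ ht'
    rw [intervalIntegral.integral_of_le ht'.le] at h
    simp only [add_sub_cancel_right] at h
    rw [h, show ζ * (k:ℝ) + 1 + ζ - 1 = ζ * ((k:ℝ) + 1) by ring,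
      show ζ * (k:ℝ) + 1 + ζ = ζ * ((k:ℝ) + 1) + 1 by ring]
  have hEint : ∀ k : ℕ, IntegrableOn (E k) (Ioc 0 t) := by
    intro k
    apply Integrable.congr (((hbetaInt k).ofReal (𝕜 := ℂ)).const_mul (Cg k))
    filter_upwards [ae_restrict_mem measurableSet_Ioc] with s hs
    exact (h_eq k s hs).symm
  have hEval : ∀ k : ℕ, ∫ s in Ioc (0:ℝ) t, E k s
      = lam ^ k * ((t ^ (ζ * ((k:ℝ) + 1)) : ℝ) : ℂ)
          / ((Real.Gamma (ζ * ((k:ℝ) + 1) + 1) : ℝ) : ℂ) := by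
    intro k
    rw [MeasureTheory.setIntegral_congr_fun measurableSet_Ioc (h_eq k),
      MeasureTheory.integral_const_mul,
      show (∫ s in Ioc (0:ℝ) t, ((s ^ (ζ * k) * (t - s) ^ (ζ - 1) : ℝ) : ℂ))
        = ((∫ s in Ioc (0:ℝ) t, s ^ (ζ * k) * (t - s) ^ (ζ - 1) : ℝ) : ℂ) from integral_ofReal,
      hval k, hCg_def]
    have h1 : ((Real.Gamma ζ : ℝ) : ℂ) ≠ 0 := Complex.ofReal_ne_zero.mpr hGζ.ne'
    have h2 : ((Real.Gamma (ζ * k + 1) : ℝ) : ℂ) ≠ 0 :=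
      Complex.ofReal_ne_zero.mpr (hGpos _ (by positivity)).ne'
    have h3 : ((Real.Gamma (ζ * ((k:ℝ) + 1) + 1) : ℝ) : ℂ) ≠ 0 :=
      Complex.ofReal_ne_zero.mpr (hGpos _ (by positivity)).ne'
    push_cast
    field_simp [h1, h2, h3]
  have hEnorm : ∀ k : ℕ, ∫ s in Ioc (0:ℝ) t, ‖E k s‖
      = ‖lam‖ ^ k / (Real.Gamma ζ * Real.Gamma (ζ * k + 1)) *
          (Real.Gamma (ζ * k + 1) * Real.Gamma ζ / Real.Gamma (ζ * (k + 1) + 1)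
            * t ^ (ζ * (k + 1))) := by
    intro k
    have heq : ∀ s ∈ Ioc (0:ℝ) t, ‖E k s‖
        = ‖lam‖ ^ k / (Real.Gamma ζ * Real.Gamma (ζ * k + 1)) *
            (s ^ (ζ * k) * (t - s) ^ (ζ - 1)) := by
      intro s hs
      have h1 : (0:ℝ) ≤ s ^ (ζ * k) * (t - s) ^ (ζ - 1) := by
        have := hs.1
        have h2 : (0:ℝ) ≤ t - s := by linarith [hs.2]
        positivity
      rw [h_eq k s hs, norm_mul, Complex.norm_real, Real.norm_of_nonneg h1, hCg_def]
      simp only [norm_div, norm_mul, norm_pow, Complex.norm_real]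
      rw [Real.norm_of_nonneg hGζ.le, Real.norm_of_nonneg (hGpos _ (by positivity)).le]
    rw [MeasureTheory.setIntegral_congr_fun measurableSet_Ioc heq,
      MeasureTheory.integral_const_mul, hval k]
  have hsumnorm : Summable (fun k : ℕ => ∫ s in Ioc (0:ℝ) t, ‖E k s‖) := by
    have hS := (summable_pow_div_Gamma hζ (show (1:ℝ) ≤ ζ + 1 by linarith)
      (show (0:ℝ) ≤ ‖lam‖ * t ^ ζ by positivity)).mul_left (t ^ ζ)
    apply hS.congr
    intro k
    rw [hEnorm k]
    have e1 : t ^ (ζ * ((k:ℝ) + 1)) = (t ^ ζ) ^ k * t ^ ζ := by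
      rw [show ζ * ((k:ℝ) + 1) = ζ * k + ζ by ring, Real.rpow_add ht',
        Real.rpow_mul ht, Real.rpow_natCast]
    rw [e1, show ζ * ((k:ℝ) + 1) + 1 = ζ * k + (ζ + 1) by ring, mul_pow]
    have g1 : Real.Gamma (ζ * k + 1) ≠ 0 := (hGpos _ (by positivity)).ne'
    have g2 : Real.Gamma (ζ * k + (ζ + 1)) ≠ 0 := (hGpos _ (by positivity)).ne'
    field_simp
  have hInt : ∫ s in (0:ℝ)..t,
      (((t - s) ^ (ζ - 1) / Real.Gamma ζ : ℝ) : ℂ) *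
        (∑' k : ℕ, (lam * ((s ^ ζ : ℝ) : ℂ)) ^ k / Complex.Gamma ((ζ:ℂ) * (k:ℂ) + 1))
      = ∑' k : ℕ, ∫ s in Ioc (0:ℝ) t, E k s := by
    rw [intervalIntegral.integral_of_le ht'.le]
    rw [show (fun s : ℝ => (((t - s) ^ (ζ - 1) / Real.Gamma ζ : ℝ) : ℂ) *
        (∑' k : ℕ, (lam * ((s ^ ζ : ℝ) : ℂ)) ^ k / Complex.Gamma ((ζ:ℂ) * (k:ℂ) + 1)))
        = fun s : ℝ => ∑' k : ℕ, E k s from funext fun s => by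
          rw [hE_def]; exact tsum_mul_left.symm]
    exact (MeasureTheory.integral_tsum_of_summable_integral_norm hEint hsumnorm).symm
  show (∑' k : ℕ, (lam * ((t ^ ζ : ℝ) : ℂ)) ^ k / Complex.Gamma ((ζ:ℂ) * (k:ℂ) + 1))
      = 1 + lam * ∫ s in (0:ℝ)..t,
        (((t - s) ^ (ζ - 1) / Real.Gamma ζ : ℝ) : ℂ) *
          (∑' k : ℕ, (lam * ((s ^ ζ : ℝ) : ℂ)) ^ k / Complex.Gamma ((ζ:ℂ) * (k:ℂ) + 1))
  rw [hInt, Summable.tsum_eq_zero_add (hsummC t ht)]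
  congr 1
  · norm_num [Complex.Gamma_one]
  · rw [← tsum_mul_left]
    apply tsum_congr
    intro k
    rw [hterm t ht (k + 1), hEval k]
    push_cast
    ring
end

section
/- Let ζ ∈ (1,2] and λ ∈ ℂ. Define F_λ(z) := z · E_{ζ,2}(z^ζ λ) for z ∈ ℂ, where E_{ζ,2}(w) = Σ_{k≥0} w^k/Γ(ζk+2). Then for all real t ≥ 0, F_λ'(t) = E_ζ(t^ζ λ), and there exists d_ζ > 0 such that |F_λ(z)| ≤ d_ζ (1+|z|) e^{|z| |λ|^{1/ζ}} for all z ∈ ℂ. -/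
open Complex Real Topology Filter

private lemma Real_Gamma_two : Real.Gamma 2 = 1 := by
  have := Real.Gamma_nat_eq_factorial 1
  norm_num at this
  simpa using this

private lemma fact_le_Gamma_aux {x : ℝ} (n : ℕ) (h2 : 2 ≤ x) (hn : (n : ℝ) + 1 ≤ x) :
    (n.factorial : ℝ) ≤ Real.Gamma x := by
  have hmono := Real.Gamma_strictMonoOn_Ici.monotoneOn
  rcases Nat.eq_zero_or_pos n with h0 | hpos
  · subst h0
    have h := hmono (Set.mem_Ici.2 le_rfl) (Set.mem_Ici.2 h2) h2
    rw [Real_Gamma_two] at h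
    simpa using h
  · have hn2 : (2 : ℝ) ≤ (n : ℝ) + 1 := by
      have : (1 : ℝ) ≤ (n : ℝ) := by exact_mod_cast hpos
      linarith
    have h := hmono (Set.mem_Ici.2 hn2) (Set.mem_Ici.2 h2) hn
    rwa [Real.Gamma_nat_eq_factorial] at h

private lemma summable_ml {ζ : ℝ} (hζ1 : 1 < ζ) {q : ℝ} (hq : 0 ≤ q) :
    Summable (fun k : ℕ => q ^ k / Real.Gamma (ζ * k + 2)) := by
  have hζ0 : (0 : ℝ) < ζ := lt_trans one_pos hζ1
  refine Summable.of_nonneg_of_le (fun k => ?_) (fun k => ?_)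
    (Real.summable_pow_div_factorial q)
  · have h := Real.Gamma_pos_of_pos (show (0:ℝ) < ζ * k + 2 by positivity)
    positivity
  · have hfle : (k.factorial : ℝ) ≤ Real.Gamma (ζ * k + 2) := by
      apply fact_le_Gamma_aux
      · have : (0:ℝ) ≤ ζ * k := by positivity
        linarith
      · have : (k : ℝ) ≤ ζ * k := by nlinarith [Nat.cast_nonneg (α := ℝ) k]
        linarith
    have hfp : (0:ℝ) < (k.factorial : ℝ) := by exact_mod_cast Nat.factorial_pos k
    exact div_le_div_of_nonneg_left (pow_nonneg hq k) hfp hfle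

private lemma tsum_ml_le {ζ : ℝ} (hζ1 : 1 < ζ) (hζ2 : ζ ≤ 2) {r : ℝ} (hr : 0 ≤ r) :
    (∑' k : ℕ, (r ^ ζ) ^ k / Real.Gamma (ζ * k + 2)) ≤ 2 * Real.exp r := by
  have hζ0 : (0 : ℝ) < ζ := lt_trans one_pos hζ1
  rcases eq_or_lt_of_le hr with h0 | hrpos
  · rw [← h0, Real.zero_rpow (ne_of_gt hζ0)]
    have h1 : (∑' k : ℕ, (0:ℝ) ^ k / Real.Gamma (ζ * k + 2)) = 1 := by
      rw [tsum_eq_single 0 (fun k hk => by rw [zero_pow hk, zero_div])]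
      simp [Real_Gamma_two]
    rw [h1]
    rw [Real.exp_zero]
    norm_num
  · have hsummand : Summable (fun k : ℕ => (r ^ ζ) ^ k / Real.Gamma (ζ * k + 2)) :=
      summable_ml hζ1 (Real.rpow_nonneg hr ζ)
    have hsumh : Summable (fun n : ℕ => r ^ n / (n.factorial : ℝ)) :=
      Real.summable_pow_div_factorial r
    have hexp : (∑' n : ℕ, r ^ n / (n.factorial : ℝ)) = Real.exp r := by
      rw [Real.exp_eq_exp_ℝ, NormedSpace.exp_eq_tsum_div]
    have hζk : ∀ k : ℕ, (0:ℝ) ≤ ζ * k := fun k => by positivity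
    have key : ∀ (e : ℕ → ℕ), StrictMono e →
        (∀ k : ℕ, (r ^ ζ) ^ k / Real.Gamma (ζ * k + 2) ≤ r ^ (e k) / ((e k).factorial : ℝ)) →
        (∑' k : ℕ, (r ^ ζ) ^ k / Real.Gamma (ζ * k + 2)) ≤ 2 * Real.exp r := by
      intro e he hle
      have h1 := Summable.tsum_le_tsum_of_inj e he.injective
        (fun c _ => by positivity) hle hsummand hsumh
      rw [hexp] at h1
      nlinarith [Real.exp_pos r]
    have hnum : ∀ k : ℕ, (r ^ ζ) ^ k = r ^ (ζ * k) := fun k => by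
      rw [Real.rpow_mul hr, Real.rpow_natCast]
    by_cases hr1 : r ≤ 1
    · refine key (fun k => ⌊ζ * k⌋₊) (strictMono_nat_of_lt_succ fun k => ?_) (fun k => ?_)
      · calc ⌊ζ * (k:ℝ)⌋₊ < ⌊ζ * (k:ℝ)⌋₊ + 1 := Nat.lt_succ_self _
          _ = ⌊ζ * (k:ℝ) + 1⌋₊ := (Nat.floor_add_one (hζk k)).symm
          _ ≤ ⌊ζ * ((k+1 : ℕ):ℝ)⌋₊ := Nat.floor_mono (by push_cast; nlinarith)
      · rw [hnum]
        apply div_le_div₀ (by positivity) ?_ (by exact_mod_cast Nat.factorial_pos _) ?_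
        · calc r ^ (ζ * k) ≤ r ^ ((⌊ζ * (k:ℝ)⌋₊ : ℝ)) :=
              Real.rpow_le_rpow_of_exponent_ge hrpos hr1 (Nat.floor_le (hζk k))
            _ = r ^ (⌊ζ * (k:ℝ)⌋₊) := Real.rpow_natCast r _
        · apply fact_le_Gamma_aux
          · linarith [hζk k]
          · have := Nat.floor_le (hζk k); linarith
    · push_neg at hr1
      refine key (fun k => ⌈ζ * k⌉₊) (strictMono_nat_of_lt_succ fun k => ?_) (fun k => ?_)
      · calc ⌈ζ * (k:ℝ)⌉₊ < ⌈ζ * (k:ℝ)⌉₊ + 1 := Nat.lt_succ_self _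
          _ = ⌈ζ * (k:ℝ) + 1⌉₊ := (Nat.ceil_add_one (hζk k)).symm
          _ ≤ ⌈ζ * ((k+1 : ℕ):ℝ)⌉₊ := Nat.ceil_mono (by push_cast; nlinarith)
      · rw [hnum]
        apply div_le_div₀ (by positivity) ?_ (by exact_mod_cast Nat.factorial_pos _) ?_
        · calc r ^ (ζ * k) ≤ r ^ ((⌈ζ * (k:ℝ)⌉₊ : ℝ)) :=
              Real.rpow_le_rpow_of_exponent_le hr1.le (Nat.le_ceil _)
            _ = r ^ (⌈ζ * (k:ℝ)⌉₊) := Real.rpow_natCast r _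
        · apply fact_le_Gamma_aux
          · linarith [hζk k]
          · have := Nat.ceil_lt_add_one (hζk k); linarith


/-- For `ζ ∈ (1,2]` and `λ ∈ ℂ`, the function `F_λ(z) = z E_{ζ,2}(z^ζ λ)` satisfies
`F_λ'(t) = E_ζ(t^ζ λ)` for real `t ≥ 0`, and there is `d_ζ > 0` with
`|F_λ(z)| ≤ d_ζ (1+|z|) e^{|z| |λ|^{1/ζ}}` for all `z ∈ ℂ`. -/
theorem mittagLeffler_F_deriv_and_bound (ζ : ℝ) (hζ1 : 1 < ζ) (hζ2 : ζ ≤ 2) (lam : ℂ) :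
    (∀ t : ℝ, 0 ≤ t →
      HasDerivAt (fun z : ℂ => z * ∑' k : ℕ, (z ^ (ζ : ℂ) * lam) ^ k / Complex.Gamma (ζ * k + 2))
        (∑' k : ℕ, (((t : ℂ)) ^ (ζ : ℂ) * lam) ^ k / Complex.Gamma (ζ * k + 1)) (t : ℂ)) ∧
    ∃ d : ℝ, 0 < d ∧ ∀ z : ℂ,
      ‖z * ∑' k : ℕ, (z ^ (ζ : ℂ) * lam) ^ k / Complex.Gamma (ζ * k + 2)‖ ≤
        d * (1 + ‖z‖) * Real.exp (‖z‖ * ‖lam‖ ^ (1 / ζ)) := by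
  have hζ0 : (0 : ℝ) < ζ := lt_trans one_pos hζ1
  have hcast2 : ∀ k : ℕ, ((ζ : ℂ) * k + 2) = ((ζ * k + 2 : ℝ) : ℂ) := fun k => by push_cast; ring
  have hcast1 : ∀ k : ℕ, ((ζ : ℂ) * k + 1) = ((ζ * k + 1 : ℝ) : ℂ) := fun k => by push_cast; ring
  have hGpos : ∀ k : ℕ, 0 < Real.Gamma (ζ * k + 2) := fun k =>
    Real.Gamma_pos_of_pos (by positivity)
  have hG2 : ∀ k : ℕ, Complex.Gamma ((ζ : ℂ) * k + 2) = ((Real.Gamma (ζ * k + 2) : ℝ) : ℂ) :=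
    fun k => by rw [hcast2 k, Complex.Gamma_ofReal]
  have habs : ∀ (z : ℂ) (k : ℕ),
      ‖(z ^ (ζ : ℂ) * lam) ^ k / Complex.Gamma ((ζ : ℂ) * k + 2)‖
        = (‖z‖ ^ ζ * ‖lam‖) ^ k / Real.Gamma (ζ * k + 2) := fun z k => by
    rw [norm_div, norm_pow, norm_mul, hG2, Complex.norm_real, Real.norm_eq_abs,
        abs_of_pos (hGpos k), Complex.norm_cpow_real]
  have hsummable : ∀ z : ℂ, Summable (fun k : ℕ =>
      ‖(z ^ (ζ : ℂ) * lam) ^ k / Complex.Gamma ((ζ : ℂ) * k + 2)‖) := fun z =>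
    Summable.congr (summable_ml hζ1 (q := ‖z‖ ^ ζ * ‖lam‖) (by positivity))
      (fun k => (habs z k).symm)
  constructor
  · intro t ht
    rcases eq_or_lt_of_le ht with h0 | htpos
    · subst h0
      have hone : ∀ k : ℕ, 1 ≤ Real.Gamma (ζ * k + 2) := by
        intro k
        have h0k : (0:ℝ) ≤ ζ * k := by positivity
        have h := fact_le_Gamma_aux (x := ζ * k + 2) 0 (by linarith) (by norm_num; linarith)
        simpa using h
      have hrhs : (∑' k : ℕ, (((0:ℝ) : ℂ) ^ (ζ : ℂ) * lam) ^ k / Complex.Gamma ((ζ:ℂ) * k + 1)) = 1 := by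
        rw [Complex.ofReal_zero,
          Complex.zero_cpow (Complex.ofReal_ne_zero.mpr (ne_of_gt hζ0)),
          tsum_eq_single 0 (fun k hk => by rw [zero_mul, zero_pow hk, zero_div])]
        simp [Complex.Gamma_one]
      rw [hrhs, Complex.ofReal_zero]
      rw [hasDerivAt_iff_tendsto_slope]
      -- tendsto of the sum S to 1
      have tendsto_q : Filter.Tendsto (fun z : ℂ => ‖z‖ ^ ζ * ‖lam‖)
          (𝓝[≠] (0:ℂ)) (𝓝 0) := by
        have hc : ContinuousAt (fun z : ℂ => ‖z‖ ^ ζ * ‖lam‖) 0 := by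
          apply ContinuousAt.mul ?_ continuousAt_const
          exact (Real.continuousAt_rpow_const _ _ (Or.inr hζ0.le)).comp
            continuous_norm.continuousAt
        have h0' : ‖(0:ℂ)‖ ^ ζ * ‖lam‖ = 0 := by
          simp [Real.zero_rpow (ne_of_gt hζ0)]
        have h : Filter.Tendsto (fun z : ℂ => ‖z‖ ^ ζ * ‖lam‖) (𝓝 (0:ℂ)) (𝓝 0) := by
          rw [← h0']; exact hc.tendsto
        exact h.mono_left nhdsWithin_le_nhds
      have hbound : ∀ᶠ w in 𝓝[≠] (0:ℂ),
          ‖(∑' k : ℕ, (w ^ (ζ:ℂ) * lam) ^ k / Complex.Gamma ((ζ:ℂ) * k + 2)) - 1‖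
            ≤ 2 * (‖w‖ ^ ζ * ‖lam‖) := by
        filter_upwards [tendsto_q.eventually_lt_const (show (0:ℝ) < 1/2 by norm_num)] with w hq
        set Q : ℝ := ‖w‖ ^ ζ * ‖lam‖ with hQdef
        have hQ0 : 0 ≤ Q := by positivity
        have hQ1 : Q < 1 := lt_trans hq (by norm_num)
        have hsw : Summable (fun k : ℕ => (w ^ (ζ:ℂ) * lam) ^ k / Complex.Gamma ((ζ:ℂ) * k + 2)) :=
          ((hsummable w).congr fun k => rfl).of_norm
        have hsplit := Summable.tsum_eq_zero_add hsw
        have hf0 : (w ^ (ζ:ℂ) * lam) ^ 0 / Complex.Gamma ((ζ:ℂ) * ((0:ℕ):ℂ) + 2) = 1 := by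
          rw [pow_zero, hG2 0]
          norm_num [Real_Gamma_two]
        rw [hsplit, hf0, add_sub_cancel_left]
        have hgeom : HasSum (fun k : ℕ => Q ^ (k+1)) (Q * (1 - Q)⁻¹) := by
          have h := (hasSum_geometric_of_lt_one hQ0 hQ1).mul_left Q
          simpa only [← pow_succ'] using h
        have hle : ∀ k : ℕ, ‖(w ^ (ζ:ℂ) * lam) ^ (k+1) / Complex.Gamma ((ζ:ℂ) * ((k:ℕ)+1:ℕ) + 2)‖
            ≤ Q ^ (k+1) := by
          intro k
          rw [habs]
          exact div_le_self (by positivity) (hone (k+1))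
        have h2 := tsum_of_norm_bounded hgeom hle
        refine le_trans h2 ?_
        have hinv : (1 - Q)⁻¹ ≤ 2 := by
          rw [inv_le_comm₀ (by linarith) (by norm_num)]
          linarith
        nlinarith
      have hS1 : Filter.Tendsto
          (fun w : ℂ => ∑' k : ℕ, (w ^ (ζ:ℂ) * lam) ^ k / Complex.Gamma ((ζ:ℂ) * k + 2))
          (𝓝[≠] (0:ℂ)) (𝓝 1) := by
        rw [← tendsto_sub_nhds_zero_iff]
        apply squeeze_zero_norm' hbound
        simpa using tendsto_q.const_mul (2:ℝ)
      apply hS1.congr'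
      filter_upwards [self_mem_nhdsWithin] with w hw
      have hw0 : w ≠ 0 := hw
      rw [slope_def_field]
      simp only [zero_mul, sub_zero]
      rw [mul_comm w, mul_div_assoc, div_self hw0, mul_one]
    · -- t > 0
      set U : Set ℂ := Metric.ball ((t:ℝ):ℂ) (t/2) with hUdef
      have hopen : IsOpen U := Metric.isOpen_ball
      have hconn : IsPreconnected U := (convex_ball _ _).isPreconnected
      have hmem : ((t:ℝ):ℂ) ∈ U := Metric.mem_ball_self (by linarith)
      set B : ℝ := max 1 (3 * t / 2) with hBdef
      have hB1 : (1:ℝ) ≤ B := le_max_left _ _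
      have htB : t ≤ B := le_trans (by linarith) (le_max_right _ _)
      have hball : ∀ y : ℂ, y ∈ U → y ∈ Complex.slitPlane ∧ ‖y‖ ≤ B := by
        intro y hy
        rw [hUdef, Metric.mem_ball, Complex.dist_eq] at hy
        have habst : ‖((t:ℝ):ℂ)‖ = t := by
          rw [Complex.norm_real, Real.norm_eq_abs, abs_of_pos htpos]
        constructor
        · rw [Complex.mem_slitPlane_iff]
          left
          have h1 : |(y - (t:ℂ)).re| ≤ ‖y - (t:ℂ)‖ := Complex.abs_re_le_norm _
          have h2 : (y - (t:ℂ)).re = y.re - t := by simp [Complex.sub_re]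
          rw [h2] at h1
          have h3 := abs_le.mp (le_of_lt (lt_of_le_of_lt h1 hy))
          linarith [h3.1]
        · calc ‖y‖ = ‖(y - (t:ℂ)) + (t:ℂ)‖ := by congr 1; ring
            _ ≤ ‖y - (t:ℂ)‖ + ‖((t:ℝ):ℂ)‖ := norm_add_le _ _
            _ ≤ t/2 + t := by rw [habst]; linarith
            _ ≤ B := le_trans (by linarith) (le_max_right _ _)
      -- Gamma lower bound by factorial
      have hfact : ∀ k : ℕ, (k.factorial : ℝ) ≤ Real.Gamma (ζ * k + 2) := by
        intro k
        apply fact_le_Gamma_aux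
        · have : (0:ℝ) ≤ ζ * k := by positivity
          linarith
        · have : (k : ℝ) ≤ ζ * k := by nlinarith [Nat.cast_nonneg (α := ℝ) k]
          linarith
      -- summable derivative bound
      have hu : Summable (fun k : ℕ => 2 * (2 * B^2 * ‖lam‖)^k / (k.factorial : ℝ)) :=
        ((Real.summable_pow_div_factorial (2 * B^2 * ‖lam‖)).mul_left 2).congr
          (fun k => (mul_div_assoc _ _ _).symm)
      -- derivative of each term
      have hderiv : ∀ (k : ℕ) (y : ℂ), y ∈ U →
          HasDerivAt (fun z : ℂ => lam ^ k * z ^ ((ζ:ℂ) * k + 1) / Complex.Gamma ((ζ:ℂ) * k + 2))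
            (lam ^ k * (((ζ:ℂ) * k + 1) * y ^ ((ζ:ℂ) * k)) / Complex.Gamma ((ζ:ℂ) * k + 2)) y := by
        intro k y hy
        have h1 : HasDerivAt (fun z : ℂ => z ^ ((ζ:ℂ) * k + 1))
            (((ζ:ℂ) * k + 1) * y ^ (((ζ:ℂ) * k + 1) - 1)) y :=
          (Complex.hasStrictDerivAt_cpow_const (hball y hy).1).hasDerivAt
        have h3 : ((ζ:ℂ) * k + 1 - 1) = (ζ:ℂ) * k := by ring
        rw [h3] at h1
        exact (h1.const_mul (lam ^ k)).div_const (Complex.Gamma ((ζ:ℂ) * k + 2))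
      -- norm bound on derivatives over U
      have hbound' : ∀ (k : ℕ) (y : ℂ), y ∈ U →
          ‖lam ^ k * (((ζ:ℂ) * k + 1) * y ^ ((ζ:ℂ) * k)) / Complex.Gamma ((ζ:ℂ) * k + 2)‖
            ≤ 2 * (2 * B^2 * ‖lam‖)^k / (k.factorial : ℝ) := by
        intro k y hy
        obtain ⟨hslit, hyB⟩ := hball y hy
        have hcastk : ((ζ:ℂ) * k) = ((ζ * k : ℝ) : ℂ) := by push_cast; ring
        rw [norm_div, norm_mul, norm_mul, norm_pow, hG2, Complex.norm_real, Real.norm_eq_abs,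
            abs_of_pos (hGpos k), hcast1 k, Complex.norm_real, Real.norm_eq_abs,
            abs_of_pos (by positivity : (0:ℝ) < ζ * k + 1), hcastk, Complex.norm_cpow_real]
        have h1 : ‖y‖ ^ (ζ * (k:ℝ)) ≤ (B^2)^k := by
          calc ‖y‖ ^ (ζ * (k:ℝ)) ≤ B ^ (ζ * (k:ℝ)) :=
                Real.rpow_le_rpow (norm_nonneg y) hyB (by positivity)
            _ ≤ B ^ (((2*k : ℕ) : ℝ)) := by
                apply Real.rpow_le_rpow_of_exponent_le hB1
                push_cast
                nlinarith [Nat.cast_nonneg (α := ℝ) k]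
            _ = B ^ (2*k) := Real.rpow_natCast B (2*k)
            _ = (B^2)^k := pow_mul B 2 k
        have h2 : ζ * (k:ℝ) + 1 ≤ 2 * 2^k := by
          have hk2 : (k:ℝ) + 1 ≤ 2^k := by
            have h' : k + 1 ≤ 2^k := Nat.succ_le_of_lt (Nat.lt_two_pow_self (n := k))
            exact_mod_cast h'
          nlinarith [Nat.cast_nonneg (α := ℝ) k]
        apply div_le_div₀ (by positivity) ?_ (by exact_mod_cast Nat.factorial_pos k) (hfact k)
        calc ‖lam‖ ^ k * ((ζ * k + 1) * ‖y‖ ^ (ζ * (k:ℝ)))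
            ≤ ‖lam‖ ^ k * ((2 * 2^k) * (B^2)^k) := by
              apply mul_le_mul_of_nonneg_left ?_ (by positivity)
              exact mul_le_mul h2 h1 (by positivity) (by positivity)
          _ = 2 * (2 * B^2 * ‖lam‖)^k := by
              rw [mul_pow, mul_pow]; ring
      -- summability at the point t
      have hg0 : Summable (fun k : ℕ =>
          lam ^ k * ((t:ℂ)) ^ ((ζ:ℂ) * k + 1) / Complex.Gamma ((ζ:ℂ) * k + 2)) := by
        apply Summable.of_norm
        have hv : Summable (fun k : ℕ => B * (2 * B^2 * ‖lam‖)^k / (k.factorial : ℝ)) :=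
          ((Real.summable_pow_div_factorial (2 * B^2 * ‖lam‖)).mul_left B).congr
            (fun k => (mul_div_assoc _ _ _).symm)
        apply Summable.of_nonneg_of_le (fun k => norm_nonneg _) ?_ hv
        intro k
        rw [norm_div, norm_mul, norm_pow, hG2, Complex.norm_real, Real.norm_eq_abs,
            abs_of_pos (hGpos k), hcast1 k, Complex.norm_cpow_real, Complex.norm_real, Real.norm_eq_abs,
            abs_of_pos htpos]
        have h1 : t ^ (ζ * (k:ℝ) + 1) ≤ (B^2)^k * B := by
          rw [Real.rpow_add htpos, Real.rpow_one]
          have h2 : t ^ (ζ * (k:ℝ)) ≤ (B^2)^k := by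
            calc t ^ (ζ * (k:ℝ)) ≤ B ^ (ζ * (k:ℝ)) :=
                  Real.rpow_le_rpow htpos.le htB (by positivity)
              _ ≤ B ^ (((2*k : ℕ) : ℝ)) := by
                  apply Real.rpow_le_rpow_of_exponent_le hB1
                  push_cast
                  nlinarith [Nat.cast_nonneg (α := ℝ) k]
              _ = B ^ (2*k) := Real.rpow_natCast B (2*k)
              _ = (B^2)^k := pow_mul B 2 k
          exact mul_le_mul h2 htB htpos.le (by positivity)
        apply div_le_div₀ (by positivity) ?_ (by exact_mod_cast Nat.factorial_pos k) (hfact k)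
        calc ‖lam‖ ^ k * t ^ (ζ * (k:ℝ) + 1)
            ≤ ‖lam‖ ^ k * ((B^2)^k * B) := by
              apply mul_le_mul_of_nonneg_left h1 (by positivity)
          _ ≤ B * (2 * B^2 * ‖lam‖)^k := by
              rw [mul_pow, mul_pow]
              have h2k : (1:ℝ) ≤ 2^k := one_le_pow₀ one_le_two
              calc ‖lam‖ ^ k * ((B^2)^k * B)
                  = B * (1 * ((B^2)^k * ‖lam‖ ^ k)) := by ring
                _ ≤ B * (2^k * ((B^2)^k * ‖lam‖ ^ k)) := by
                    apply mul_le_mul_of_nonneg_left ?_ (by linarith : (0:ℝ) ≤ B)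
                    apply mul_le_mul_of_nonneg_right h2k (by positivity)
                _ = B * (2^k * (B^2)^k * ‖lam‖ ^ k) := by ring
      -- the main derivative statement for the series
      have hmain := hasDerivAt_tsum_of_isPreconnected hu hopen hconn hderiv hbound' hmem hg0 hmem
      -- identify F with the series
      have hFG : (fun z : ℂ => z * ∑' k : ℕ, (z ^ (ζ : ℂ) * lam) ^ k / Complex.Gamma ((ζ:ℂ) * k + 2))
          = fun z : ℂ => ∑' k : ℕ, lam ^ k * z ^ ((ζ:ℂ) * k + 1) / Complex.Gamma ((ζ:ℂ) * k + 2) := by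
        funext z
        rw [← tsum_mul_left]
        refine tsum_congr fun k => ?_
        rcases eq_or_ne z 0 with rfl | hz
        · rw [zero_mul, hcast1 k, Complex.zero_cpow
            (Complex.ofReal_ne_zero.mpr (by positivity : (ζ * k + 1 : ℝ) ≠ 0)), mul_zero, zero_div]
        · rw [show (ζ:ℂ) * k + 1 = ((k:ℕ):ℂ) * (ζ:ℂ) + 1 by push_cast; ring,
              Complex.cpow_add _ _ hz, Complex.cpow_nat_mul, Complex.cpow_one, mul_pow]
          ring
      -- identify the derivative value
      have htsum : (∑' k : ℕ, lam ^ k * (((ζ:ℂ) * k + 1) * ((t:ℝ):ℂ) ^ ((ζ:ℂ) * k)) /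
          Complex.Gamma ((ζ:ℂ) * k + 2))
          = ∑' k : ℕ, (((t:ℝ):ℂ) ^ (ζ:ℂ) * lam) ^ k / Complex.Gamma ((ζ:ℂ) * k + 1) := by
        refine tsum_congr fun k => ?_
        have hc0 : ((ζ:ℂ) * k + 1) ≠ 0 := by
          rw [hcast1 k]
          exact Complex.ofReal_ne_zero.mpr (by positivity)
        have hG1ne : Complex.Gamma ((ζ:ℂ) * k + 1) ≠ 0 := by
          rw [hcast1 k, Complex.Gamma_ofReal]
          exact Complex.ofReal_ne_zero.mpr (ne_of_gt (Real.Gamma_pos_of_pos (by positivity)))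
        have hGam2 : Complex.Gamma ((ζ:ℂ) * k + 2)
            = ((ζ:ℂ) * k + 1) * Complex.Gamma ((ζ:ℂ) * k + 1) := by
          rw [show ((ζ:ℂ) * k + 2) = ((ζ:ℂ) * k + 1) + 1 by ring, Complex.Gamma_add_one _ hc0]
        have hcp : ((t:ℝ):ℂ) ^ ((ζ:ℂ) * (k:ℂ)) = (((t:ℝ):ℂ) ^ (ζ:ℂ)) ^ k := by
          rw [show ((ζ:ℂ) * (k:ℂ)) = ((k:ℕ):ℂ) * (ζ:ℂ) by ring, Complex.cpow_nat_mul]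
        rw [hGam2, hcp, mul_pow]
        field_simp
      rw [hFG, ← htsum]
      exact hmain
  · refine ⟨2, two_pos, fun z => ?_⟩
    set r : ℝ := ‖z‖ * ‖lam‖ ^ (1 / ζ) with hrdef
    have hr0 : 0 ≤ r := by positivity
    have hrζ : r ^ ζ = ‖z‖ ^ ζ * ‖lam‖ := by
      rw [hrdef, Real.mul_rpow (by positivity) (by positivity),
          ← Real.rpow_mul (norm_nonneg lam), one_div,
          inv_mul_cancel₀ (ne_of_gt hζ0), Real.rpow_one]
    have hs' : Summable (fun k : ℕ =>
        ‖(z ^ (ζ : ℂ) * lam) ^ k / Complex.Gamma ((ζ : ℂ) * k + 2)‖) :=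
      (hsummable z).congr fun k => rfl
    have hnorm := norm_tsum_le_tsum_norm hs'
    have h1 : ‖∑' k : ℕ, (z ^ (ζ : ℂ) * lam) ^ k / Complex.Gamma ((ζ : ℂ) * k + 2)‖
        ≤ ∑' k : ℕ, (r ^ ζ) ^ k / Real.Gamma (ζ * k + 2) := by
      refine le_trans hnorm (le_of_eq (tsum_congr fun k => ?_))
      rw [habs, hrζ]
    have h2 := tsum_ml_le hζ1 hζ2 hr0
    rw [norm_mul]
    have h3 : ‖∑' k : ℕ, (z ^ (ζ : ℂ) * lam) ^ k / Complex.Gamma ((ζ : ℂ) * k + 2)‖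
        ≤ 2 * Real.exp r := le_trans h1 h2
    nlinarith [Real.exp_pos r, norm_nonneg z,
      norm_nonneg (∑' k : ℕ, (z ^ (ζ : ℂ) * lam) ^ k / Complex.Gamma ((ζ : ℂ) * k + 2))]
end

section
/- Let ζ ∈ (0,1], θ ∈ (π−πζ, π−πζ/2), 1 < b < (πζ/2)/(π−πζ/2−θ), a > 0, and let c > 0 satisfy c = cos(bζ^{-1}(π−πζ/2−θ)) > 0. Then for every ε > 0 and every z ∈ ℂ, the function λ ↦ e^{−ε(a−λ)^{b/ζ}} E_ζ(z^ζ λ) satisfies |e^{−ε(a−λ)^{b/ζ}} E_ζ(z^ζ λ)| ≤ c_ζ e^{−ε|a−λ|^{b/ζ} c + |z||λ|^{1/ζ}} for all λ with a−λ ∈ Σ_{π−πζ/2−θ}, where c_ζ is a constant depending only on ζ. In particular, since b > 1, the right-hand side tends to 0 as |λ| → ∞ along such λ, for each fixed z and ε. -/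
open Real Complex Filter
open scoped Nat

private lemma geom_le_add {a b d : ℝ} (ha : 0 ≤ a) (hb : 0 ≤ b) (hd0 : 0 ≤ d) (hd1 : d ≤ 1) :
    a ^ d * b ^ (1 - d) ≤ a + b := by
  have hM : 0 ≤ max a b := le_max_of_le_left ha
  have h1 : a ^ d * b ^ (1 - d) ≤ (max a b) ^ d * (max a b) ^ (1 - d) := by
    have e1 : a ^ d ≤ (max a b) ^ d := Real.rpow_le_rpow ha (le_max_left a b) hd0
    have e2 : b ^ (1 - d) ≤ (max a b) ^ (1 - d) :=
      Real.rpow_le_rpow hb (le_max_right a b) (by linarith)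
    exact mul_le_mul e1 e2 (Real.rpow_nonneg hb _) (Real.rpow_nonneg hM _)
  have h2 : (max a b) ^ d * (max a b) ^ (1 - d) = max a b := by
    rw [← Real.rpow_add' hM (by norm_num)]
    simp
  calc a ^ d * b ^ (1 - d) ≤ (max a b) ^ d * (max a b) ^ (1 - d) := h1
    _ = max a b := h2
    _ ≤ a + b := max_le (by linarith) (by linarith)

private lemma factorial_le_gamma_mul (x : ℝ) (hx : 0 ≤ x) :
    ((Nat.floor x + 1) ! : ℝ) ≤
      Real.Gamma (x + 1) * ((Nat.floor x : ℝ) + 2) ^ (1 - (x - Nat.floor x)) := by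
  set m : ℕ := Nat.floor x with hm
  have hmx : (m : ℝ) ≤ x := Nat.floor_le hx
  have hxm : x < (m : ℝ) + 1 := Nat.lt_floor_add_one x
  set δ : ℝ := x - m with hδ
  have hδ0 : 0 ≤ δ := by simp only [hδ]; linarith
  have hδ1 : δ < 1 := by simp only [hδ]; linarith
  have hp : (0:ℝ) < x + 1 := by linarith
  have hq : (0:ℝ) < x + 2 := by linarith
  have hΓp : 0 < Real.Gamma (x + 1) := Real.Gamma_pos_of_pos hp
  have hconv := Real.convexOn_log_Gamma.2 (Set.mem_Ioi.2 hp) (Set.mem_Ioi.2 hq)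
    hδ0 (by linarith : (0:ℝ) ≤ 1 - δ) (by ring : δ + (1 - δ) = 1)
  have hpt : δ • (x + 1) + (1 - δ) • (x + 2) = (m : ℝ) + 2 := by
    simp only [smul_eq_mul, hδ]; ring
  rw [hpt] at hconv
  have hΓm : Real.Gamma ((m : ℝ) + 2) = ((m + 1) ! : ℝ) := by
    have : ((m : ℝ) + 2) = ((m + 1 : ℕ) : ℝ) + 1 := by push_cast; ring
    rw [this, Real.Gamma_nat_eq_factorial]
  have hΓq : Real.Gamma (x + 2) = (x + 1) * Real.Gamma (x + 1) := by
    have : x + 2 = (x + 1) + 1 := by ring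
    rw [this, Real.Gamma_add_one (ne_of_gt hp)]
  simp only [Function.comp_apply, smul_eq_mul, hΓm, hΓq] at hconv
  have hlog : Real.log ((m + 1) ! : ℝ) ≤
      Real.log (Real.Gamma (x + 1)) + (1 - δ) * Real.log (x + 1) := by
    rw [Real.log_mul (ne_of_gt hp) (ne_of_gt hΓp)] at hconv
    calc Real.log ((m + 1) ! : ℝ)
        ≤ δ * Real.log (Real.Gamma (x + 1))
          + (1 - δ) * (Real.log (x + 1) + Real.log (Real.Gamma (x + 1))) := hconv
      _ = Real.log (Real.Gamma (x + 1)) + (1 - δ) * Real.log (x + 1) := by ring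
  have hfacpos : (0:ℝ) < ((m + 1) ! : ℝ) := by positivity
  have := Real.exp_le_exp.2 hlog
  rw [Real.exp_log hfacpos, Real.exp_add, Real.exp_log hΓp] at this
  have hrp : Real.exp ((1 - δ) * Real.log (x + 1)) = (x + 1) ^ (1 - δ) := by
    rw [Real.rpow_def_of_pos hp]; ring_nf
  rw [hrp] at this
  refine this.trans ?_
  have hbase : x + 1 ≤ (m : ℝ) + 2 := by linarith
  have := Real.rpow_le_rpow hp.le hbase (by linarith : (0:ℝ) ≤ 1 - δ)
  exact mul_le_mul_of_nonneg_left this hΓp.le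

private lemma term_le_floor (s x : ℝ) (hs : 0 ≤ s) (hx : 0 ≤ x) :
    s ^ x / Real.Gamma (x + 1) ≤
      s ^ (Nat.floor x + 1) / ((Nat.floor x + 1) ! : ℝ)
        + 2 * s ^ Nat.floor x / ((Nat.floor x) ! : ℝ) := by
  set m : ℕ := Nat.floor x with hm
  have hmx : (m : ℝ) ≤ x := Nat.floor_le hx
  have hxm : x < (m : ℝ) + 1 := Nat.lt_floor_add_one x
  set δ : ℝ := x - m with hδ
  have hδ0 : 0 ≤ δ := by simp only [hδ]; linarith
  have hδ1 : δ < 1 := by simp only [hδ]; linarith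
  have hp : (0:ℝ) < x + 1 := by linarith
  have hΓp : 0 < Real.Gamma (x + 1) := Real.Gamma_pos_of_pos hp
  have hfac1 : (0:ℝ) < ((m + 1) ! : ℝ) := by positivity
  have hfac0 : (0:ℝ) < ((m) ! : ℝ) := by positivity
  rcases eq_or_lt_of_le hs with hs0 | hs0
  · -- s = 0
    rcases eq_or_lt_of_le hx with hx0 | hx0
    · -- x = 0
      have hm0 : m = 0 := by simp [hm, ← hx0]
      rw [← hs0, ← hx0, hm0]
      norm_num [Real.Gamma_one]
    · rw [← hs0, Real.zero_rpow (ne_of_gt hx0), zero_div]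
      positivity
  · -- s > 0
    have key : s ^ x * (((m:ℝ) + 2) ^ (1 - δ)) ≤ s ^ (m + 1) + s ^ m * ((m:ℝ) + 2) := by
      have hsx : s ^ x = s ^ (m : ℕ) * s ^ δ := by
        rw [← Real.rpow_natCast s m, ← Real.rpow_add hs0]
        congr 1
        simp [hδ]
      rw [hsx, mul_assoc]
      have hg : s ^ δ * ((m:ℝ) + 2) ^ (1 - δ) ≤ s + ((m:ℝ) + 2) :=
        geom_le_add hs (by positivity) hδ0 hδ1.le
      calc s ^ (m:ℕ) * (s ^ δ * ((m:ℝ) + 2) ^ (1 - δ))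
          ≤ s ^ (m:ℕ) * (s + ((m:ℝ) + 2)) := by
            apply mul_le_mul_of_nonneg_left hg (by positivity)
        _ = s ^ (m + 1) + s ^ m * ((m:ℝ) + 2) := by ring
    have hΓlb : ((m + 1) ! : ℝ) / ((m:ℝ) + 2) ^ (1 - δ) ≤ Real.Gamma (x + 1) := by
      rw [div_le_iff₀ (by positivity)]
      exact factorial_le_gamma_mul x hx
    have h1 : s ^ x / Real.Gamma (x + 1) ≤
        s ^ x * ((m:ℝ) + 2) ^ (1 - δ) / ((m + 1) ! : ℝ) := by
      rw [div_le_div_iff₀ hΓp hfac1]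
      have := factorial_le_gamma_mul x hx
      calc s ^ x * ((m + 1) ! : ℝ)
          ≤ s ^ x * (Real.Gamma (x + 1) * ((m:ℝ) + 2) ^ (1 - δ)) := by
            apply mul_le_mul_of_nonneg_left this (Real.rpow_nonneg hs x)
        _ = s ^ x * ((m:ℝ) + 2) ^ (1 - δ) * Real.Gamma (x + 1) := by ring
    refine h1.trans ?_
    have h3 : s ^ x * ((m:ℝ) + 2) ^ (1 - δ) / ((m + 1) ! : ℝ) ≤
        (s ^ (m + 1) + s ^ m * ((m:ℝ) + 2)) / ((m + 1) ! : ℝ) := by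
      gcongr
    refine h3.trans ?_
    rw [add_div]
    refine add_le_add le_rfl ?_
    rw [div_le_div_iff₀ hfac1 hfac0]
    have hfs : ((m + 1) ! : ℝ) = ((m:ℝ) + 1) * (m ! : ℝ) := by
      push_cast [Nat.factorial_succ]; ring
    rw [hfs]
    nlinarith [mul_nonneg (mul_nonneg (pow_nonneg hs m) hfac0.le) (Nat.cast_nonneg m)]

private lemma ml_sum_bound (ζ : ℝ) (hζ0 : 0 < ζ) (hζ1 : ζ ≤ 1) (s : ℝ) (hs : 0 ≤ s) (K : ℕ) :
    ∑ k ∈ Finset.range K, s ^ (ζ * k) / Real.Gamma (ζ * k + 1)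
      ≤ 3 * (⌈1/ζ⌉₊ : ℝ) * Real.exp s := by
  set N : ℕ := ⌈1/ζ⌉₊ with hN
  have hζinv : (0:ℝ) < 1/ζ := by positivity
  have hNζ : 1/ζ ≤ (N : ℝ) := Nat.le_ceil _
  set g : ℕ → ℝ := fun m => s ^ (m+1) / ((m+1)! : ℝ) + 2 * s ^ m / (m ! : ℝ) with hgdef
  have hg0 : ∀ m, 0 ≤ g m := by
    intro m; simp only [hgdef]; positivity
  have step1 : ∑ k ∈ Finset.range K, s ^ (ζ * k) / Real.Gamma (ζ * k + 1)
      ≤ ∑ k ∈ Finset.range K, g (Nat.floor (ζ * k)) := by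
    apply Finset.sum_le_sum
    intro k _
    exact term_le_floor s (ζ * k) hs (by positivity)
  have hmaps : ∀ k ∈ Finset.range K, Nat.floor (ζ * k) ∈ Finset.range K := by
    intro k hk
    rw [Finset.mem_range] at *
    have h1 : ζ * k ≤ (k : ℝ) := mul_le_of_le_one_left (Nat.cast_nonneg k) hζ1
    have h2 : Nat.floor (ζ * k) ≤ k := by
      have := Nat.floor_mono h1
      rwa [Nat.floor_natCast] at this
    omega
  have hcard : ∀ m : ℕ, ((Finset.range K).filter fun k : ℕ => Nat.floor (ζ * k) = m).card ≤ N := by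
    intro m
    have hsub : ((Finset.range K).filter fun k : ℕ => Nat.floor (ζ * k) = m)
        ⊆ Finset.Ico ⌈(m:ℝ)/ζ⌉₊ (⌈(m:ℝ)/ζ⌉₊ + N) := by
      intro k hk
      obtain ⟨-, hfk⟩ := Finset.mem_filter.1 hk
      have hpos : (0:ℝ) ≤ ζ * k := by positivity
      have h1 : (m:ℝ) ≤ ζ * k := by rw [← hfk]; exact Nat.floor_le hpos
      have h2 : ζ * k < (m:ℝ) + 1 := by rw [← hfk]; exact Nat.lt_floor_add_one _
      rw [Finset.mem_Ico]
      constructor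
      · rw [Nat.ceil_le, div_le_iff₀ hζ0]
        linarith [h1, mul_comm ζ (k:ℝ)]
      · have hk2 : (k:ℝ) < ((m:ℝ)+1)/ζ := by
          rw [lt_div_iff₀ hζ0]; linarith [mul_comm (k:ℝ) ζ]
        have hk3 : (k:ℝ) < (⌈(m:ℝ)/ζ⌉₊ : ℝ) + N := by
          have := Nat.le_ceil ((m:ℝ)/ζ)
          have hsplit : ((m:ℝ)+1)/ζ = (m:ℝ)/ζ + 1/ζ := by ring
          linarith
        exact_mod_cast hk3
    calc ((Finset.range K).filter fun k : ℕ => Nat.floor (ζ * k) = m).card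
        ≤ (Finset.Ico ⌈(m:ℝ)/ζ⌉₊ (⌈(m:ℝ)/ζ⌉₊ + N)).card := Finset.card_le_card hsub
      _ = N := by rw [Nat.card_Ico]; omega
  have step2 : ∑ k ∈ Finset.range K, g (Nat.floor (ζ * k))
      ≤ ∑ m ∈ Finset.range K, (N : ℝ) * g m := by
    rw [← Finset.sum_fiberwise_of_maps_to hmaps (fun k => g (Nat.floor (ζ * k)))]
    apply Finset.sum_le_sum
    intro m _
    calc ∑ k ∈ (Finset.range K).filter (fun k : ℕ => Nat.floor (ζ * k) = m), g (Nat.floor (ζ * k))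
        = ∑ k ∈ (Finset.range K).filter (fun k : ℕ => Nat.floor (ζ * k) = m), g m :=
          Finset.sum_congr rfl (fun k hk => by rw [(Finset.mem_filter.1 hk).2])
      _ = (((Finset.range K).filter fun k : ℕ => Nat.floor (ζ * k) = m).card : ℝ) * g m := by
          rw [Finset.sum_const, nsmul_eq_mul]
      _ ≤ (N : ℝ) * g m := by
          apply mul_le_mul_of_nonneg_right _ (hg0 m)
          exact_mod_cast hcard m
  have step3 : ∑ m ∈ Finset.range K, g m ≤ 3 * Real.exp s := by
    have e1 : ∑ m ∈ Finset.range K, s ^ (m+1) / ((m+1)! : ℝ) ≤ Real.exp s := by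
      have := Real.sum_le_exp_of_nonneg hs (K+1)
      rw [Finset.sum_range_succ'] at this
      have h0 : (0:ℝ) ≤ s ^ 0 / (0! : ℝ) := by positivity
      linarith
    have e2 : ∑ m ∈ Finset.range K, 2 * s ^ m / (m ! : ℝ) ≤ 2 * Real.exp s := by
      have := Real.sum_le_exp_of_nonneg hs K
      calc ∑ m ∈ Finset.range K, 2 * s ^ m / (m ! : ℝ)
          = 2 * ∑ m ∈ Finset.range K, s ^ m / (m ! : ℝ) := by
            rw [Finset.mul_sum]; apply Finset.sum_congr rfl; intro m _; ring
        _ ≤ 2 * Real.exp s := by linarith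
    calc ∑ m ∈ Finset.range K, g m
        = (∑ m ∈ Finset.range K, s ^ (m+1) / ((m+1)! : ℝ))
          + ∑ m ∈ Finset.range K, 2 * s ^ m / (m ! : ℝ) := by
          rw [← Finset.sum_add_distrib]
      _ ≤ Real.exp s + 2 * Real.exp s := add_le_add e1 e2
      _ = 3 * Real.exp s := by ring
  calc ∑ k ∈ Finset.range K, s ^ (ζ * k) / Real.Gamma (ζ * k + 1)
      ≤ ∑ k ∈ Finset.range K, g (Nat.floor (ζ * k)) := step1
    _ ≤ ∑ m ∈ Finset.range K, (N : ℝ) * g m := step2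
    _ = (N : ℝ) * ∑ m ∈ Finset.range K, g m := by rw [← Finset.mul_sum]
    _ ≤ (N : ℝ) * (3 * Real.exp s) := by
        apply mul_le_mul_of_nonneg_left step3 (Nat.cast_nonneg N)
  linarith [mul_comm (N:ℝ) (3 * Real.exp s)]
/-- Decay estimate for the regularized Mittag-Leffler integrand:
`|e^{−ε(a−λ)^{b/ζ}} E_ζ(z^ζ λ)| ≤ c_ζ e^{−ε|a−λ|^{b/ζ} c + |z||λ|^{1/ζ}}`
for `λ` with `a−λ ∈ Σ_{π−πζ/2−θ}`, where `c = cos(bζ^{-1}(π−πζ/2−θ)) > 0`;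
in particular (since `b > 1`), for each fixed `z` and `ε > 0` the right-hand side
tends to `0` as `|λ| → ∞` along such `λ`. -/
theorem regularized_mittagLeffler_decay (ζ θ b a c : ℝ) (hζ0 : 0 < ζ) (hζ1 : ζ ≤ 1)
    (hθ1 : π - π * ζ < θ) (hθ2 : θ < π - π * ζ / 2)
    (hb1 : 1 < b) (hb2 : b < (π * ζ / 2) / (π - π * ζ / 2 - θ)) (ha : 0 < a)
    (hc : c = Real.cos (b / ζ * (π - π * ζ / 2 - θ))) (hcpos : 0 < c) :
    ∃ cζ : ℝ, 0 < cζ ∧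
      (∀ ε : ℝ, 0 < ε → ∀ z lam : ℂ,
        ((a : ℂ) - lam ≠ 0 ∧ |Complex.arg ((a : ℂ) - lam)| < π - π * ζ / 2 - θ) →
        ‖Complex.exp (-(ε : ℂ) * ((a : ℂ) - lam) ^ ((b / ζ : ℝ) : ℂ)) *
            ∑' k : ℕ, (z ^ (ζ : ℂ) * lam) ^ k / Complex.Gamma (ζ * k + 1)‖ ≤
          cζ * Real.exp (-ε * ‖(a : ℂ) - lam‖ ^ (b / ζ) * c +
            ‖z‖ * ‖lam‖ ^ (1 / ζ))) ∧
      (∀ ε : ℝ, 0 < ε → ∀ z : ℂ,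
        Tendsto (fun lam : ℂ =>
            cζ * Real.exp (-ε * ‖(a : ℂ) - lam‖ ^ (b / ζ) * c +
              ‖z‖ * ‖lam‖ ^ (1 / ζ)))
          ((Filter.comap (fun w : ℂ => ‖w‖) Filter.atTop) ⊓
            Filter.principal {lam : ℂ |
              (a : ℂ) - lam ≠ 0 ∧ |Complex.arg ((a : ℂ) - lam)| < π - π * ζ / 2 - θ})
          (nhds 0)) := by
  have hφ : 0 < π - π * ζ / 2 - θ := by linarith
  have hβ0 : 0 < b / ζ := by positivity
  have hζinv : (0:ℝ) < 1 / ζ := by positivity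
  have hβζ : 1 / ζ < b / ζ := by gcongr
  have hβφ : b / ζ * (π - π * ζ / 2 - θ) < π / 2 := by
    have hbφ : b * (π - π * ζ / 2 - θ) < π * ζ / 2 := (lt_div_iff₀ hφ).1 hb2
    calc b / ζ * (π - π * ζ / 2 - θ) = b * (π - π * ζ / 2 - θ) / ζ := by ring
      _ < (π * ζ / 2) / ζ := by gcongr
      _ = π / 2 := by field_simp
  have hNpos : (0:ℝ) < (⌈1/ζ⌉₊ : ℝ) := by
    exact_mod_cast Nat.ceil_pos.2 hζinv
  refine ⟨3 * (⌈1/ζ⌉₊ : ℝ), by linarith, ?_, ?_⟩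
  · -- Part 1: the pointwise bound
    rintro ε hε z lam ⟨hne, harg⟩
    set w : ℂ := (a:ℂ) - lam with hw
    have ht0 : 0 < ‖w‖ := norm_pos_iff.mpr hne
    set t : ℝ := ‖w‖ with htdef
    set s : ℝ := ‖z‖ * ‖lam‖ ^ (1/ζ) with hsdef
    have hs0 : 0 ≤ s := by positivity
    -- bound on the exponential factor
    have h1 : (Complex.log w * ((b/ζ : ℝ):ℂ)).re = Real.log t * (b/ζ) := by
      simp [Complex.mul_re, Complex.log_re, htdef]
    have h2 : (Complex.log w * ((b/ζ : ℝ):ℂ)).im = Complex.arg w * (b/ζ) := by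
      simp [Complex.mul_im, Complex.log_im]
    have h3 : (w ^ ((b/ζ : ℝ):ℂ)).re = t ^ (b/ζ) * Real.cos (b/ζ * Complex.arg w) := by
      rw [Complex.cpow_def_of_ne_zero hne, Complex.exp_re, h1, h2,
        ← Real.rpow_def_of_pos ht0, mul_comm (Complex.arg w)]
    have h4 : (-(ε:ℂ) * w ^ ((b/ζ : ℝ):ℂ)).re = -ε * (w ^ ((b/ζ : ℝ):ℂ)).re := by
      simp [Complex.mul_re]
    have hcos : c ≤ Real.cos (b/ζ * Complex.arg w) := by
      rw [hc, ← Real.cos_abs (b/ζ * Complex.arg w)]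
      apply Real.cos_le_cos_of_nonneg_of_le_pi (abs_nonneg _)
        (by linarith [Real.pi_pos] : b / ζ * (π - π * ζ / 2 - θ) ≤ π)
      rw [abs_mul, abs_of_pos hβ0]
      exact mul_le_mul_of_nonneg_left harg.le hβ0.le
    have hexpfac : ‖Complex.exp (-(ε:ℂ) * w ^ ((b/ζ : ℝ):ℂ))‖
        ≤ Real.exp (-ε * t ^ (b/ζ) * c) := by
      rw [Complex.norm_exp]
      apply Real.exp_le_exp.2
      rw [h4, h3]
      have hpow : (0:ℝ) ≤ t ^ (b/ζ) := Real.rpow_nonneg ht0.le _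
      nlinarith [mul_le_mul_of_nonneg_left hcos hpow]
    -- the series factor
    have hterm : ∀ k : ℕ, ‖(z ^ (ζ:ℂ) * lam) ^ k / Complex.Gamma ((ζ:ℂ) * k + 1)‖
        = s ^ (ζ * k) / Real.Gamma (ζ * k + 1) := by
      intro k
      have hcast : ((ζ:ℂ) * k + 1) = ((ζ * k + 1 : ℝ) : ℂ) := by push_cast; ring
      have hΓpos : 0 < Real.Gamma (ζ * k + 1) := Real.Gamma_pos_of_pos (by positivity)
      rw [norm_div, norm_pow, hcast, Complex.Gamma_ofReal,
        Complex.norm_of_nonneg hΓpos.le]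
      congr 1
      have hsζ : s ^ ζ = ‖z‖ ^ ζ * ‖lam‖ := by
        rw [hsdef, Real.mul_rpow (norm_nonneg z)
          (Real.rpow_nonneg (norm_nonneg lam) _),
          ← Real.rpow_mul (norm_nonneg lam), one_div,
          inv_mul_cancel₀ (ne_of_gt hζ0), Real.rpow_one]
      rw [norm_mul, Complex.norm_cpow_real, ← hsζ, ← Real.rpow_natCast (s ^ ζ) k,
        ← Real.rpow_mul hs0]
    have hf0 : ∀ k : ℕ, 0 ≤ s ^ (ζ * k) / Real.Gamma (ζ * k + 1) := fun k =>
      div_nonneg (Real.rpow_nonneg hs0 _) (Real.Gamma_pos_of_pos (by positivity)).le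
    have hsum_norm : Summable (fun k : ℕ => s ^ (ζ * k) / Real.Gamma (ζ * k + 1)) :=
      summable_of_sum_range_le hf0 (fun n => ml_sum_bound ζ hζ0 hζ1 s hs0 n)
    have hnorm_eq : (fun k : ℕ => ‖(z ^ (ζ:ℂ) * lam) ^ k / Complex.Gamma ((ζ:ℂ) * k + 1)‖)
        = fun k : ℕ => s ^ (ζ * k) / Real.Gamma (ζ * k + 1) := by
      funext k; rw [hterm k]
    have hsummable : Summable fun k : ℕ => ‖(z ^ (ζ:ℂ) * lam) ^ k / Complex.Gamma ((ζ:ℂ) * k + 1)‖ := by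
      rw [hnorm_eq]; exact hsum_norm
    have htsum : ‖∑' k : ℕ, (z ^ (ζ:ℂ) * lam) ^ k / Complex.Gamma ((ζ:ℂ) * k + 1)‖
        ≤ 3 * (⌈1/ζ⌉₊ : ℝ) * Real.exp s := by
      calc ‖∑' k : ℕ, (z ^ (ζ:ℂ) * lam) ^ k / Complex.Gamma ((ζ:ℂ) * k + 1)‖
          ≤ ∑' k : ℕ, ‖(z ^ (ζ:ℂ) * lam) ^ k / Complex.Gamma ((ζ:ℂ) * k + 1)‖ :=
            norm_tsum_le_tsum_norm hsummable
        _ = ∑' k : ℕ, s ^ (ζ * k) / Real.Gamma (ζ * k + 1) := by rw [hnorm_eq]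
        _ ≤ 3 * (⌈1/ζ⌉₊ : ℝ) * Real.exp s :=
            Real.tsum_le_of_sum_range_le hf0 (fun n => ml_sum_bound ζ hζ0 hζ1 s hs0 n)
    rw [norm_mul]
    calc ‖Complex.exp (-(ε:ℂ) * w ^ ((b/ζ : ℝ):ℂ))‖ *
          ‖∑' k : ℕ, (z ^ (ζ:ℂ) * lam) ^ k / Complex.Gamma ((ζ:ℂ) * k + 1)‖
        ≤ Real.exp (-ε * t ^ (b/ζ) * c) * (3 * (⌈1/ζ⌉₊ : ℝ) * Real.exp s) :=
          mul_le_mul hexpfac htsum (norm_nonneg _) (Real.exp_nonneg _)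
      _ = 3 * (⌈1/ζ⌉₊ : ℝ) * Real.exp (-ε * t ^ (b/ζ) * c + s) := by
          rw [Real.exp_add]; ring
  · -- Part 2: decay of the bound
    intro ε hε z
    set l := (Filter.comap (fun w : ℂ => ‖w‖) Filter.atTop) ⊓
      Filter.principal {lam : ℂ |
        (a : ℂ) - lam ≠ 0 ∧ |Complex.arg ((a : ℂ) - lam)| < π - π * ζ / 2 - θ} with hldef
    have habs : Tendsto (fun lam : ℂ => ‖lam‖) l atTop :=
      tendsto_comap.mono_left inf_le_left
    set K' : ℝ := ε * c / (2:ℝ) ^ (b/ζ) with hK'def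
    have h2β : (0:ℝ) < (2:ℝ) ^ (b/ζ) := Real.rpow_pos_of_pos (by norm_num) _
    have hK' : 0 < K' := by rw [hK'def]; positivity
    have hH : Tendsto (fun t : ℝ => ‖z‖ * t ^ (1/ζ) - K' * t ^ (b/ζ)) atTop atBot := by
      have hd : (0:ℝ) < b/ζ - 1/ζ := by linarith
      have hinner : Tendsto (fun t : ℝ => ‖z‖ - K' * t ^ (b/ζ - 1/ζ)) atTop atBot := by
        have h1 : Tendsto (fun t : ℝ => K' * t ^ (b/ζ - 1/ζ)) atTop atTop :=
          (tendsto_rpow_atTop hd).const_mul_atTop hK'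
        have h2 : Tendsto (fun t : ℝ => -(K' * t ^ (b/ζ - 1/ζ))) atTop atBot :=
          tendsto_neg_atTop_atBot.comp h1
        have := tendsto_atBot_add_const_left atTop (‖z‖) h2
        simpa [sub_eq_add_neg] using this
      have h1 : Tendsto (fun t : ℝ => t ^ (1/ζ) * (‖z‖ - K' * t ^ (b/ζ - 1/ζ)))
          atTop atBot :=
        (tendsto_rpow_atTop hζinv).atTop_mul_atBot₀ hinner
      apply h1.congr'
      filter_upwards [eventually_gt_atTop (0:ℝ)] with t ht
      rw [mul_sub]
      congr 1
      · ring
      · rw [show t ^ (1/ζ) * (K' * t ^ (b/ζ - 1/ζ)) = K' * (t ^ (1/ζ) * t ^ (b/ζ - 1/ζ)) by ring,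
          ← Real.rpow_add ht]
        ring_nf
    have hHcomp : Tendsto (fun lam : ℂ => ‖z‖ * (‖lam‖) ^ (1/ζ)
        - K' * (‖lam‖) ^ (b/ζ)) l atBot := hH.comp habs
    have hev : (fun lam : ℂ => -ε * ‖(a:ℂ) - lam‖ ^ (b/ζ) * c +
          ‖z‖ * ‖lam‖ ^ (1/ζ)) ≤ᶠ[l]
        (fun lam : ℂ => ‖z‖ * (‖lam‖) ^ (1/ζ)
          - K' * (‖lam‖) ^ (b/ζ)) := by
      filter_upwards [habs.eventually (eventually_ge_atTop (2*a+1))] with lam hlam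
      have ht0 : (0:ℝ) < ‖lam‖ := by linarith
      have hwt : ‖lam‖ / 2 ≤ ‖(a:ℂ) - lam‖ := by
        have h5 : ‖lam‖ - ‖(a:ℂ)‖ ≤ ‖lam - (a:ℂ)‖ := by
          have := norm_add_le (lam - (a:ℂ)) ((a:ℂ))
          simpa using this
        have h6 : ‖lam - (a:ℂ)‖ = ‖(a:ℂ) - lam‖ := by
          rw [← norm_neg]; ring_nf
        have h7 : ‖(a:ℂ)‖ = a := by
          rw [Complex.norm_of_nonneg ha.le]
        rw [h6, h7] at h5
        linarith
      have hr1 : (‖lam‖ / 2) ^ (b/ζ) ≤ ‖(a:ℂ) - lam‖ ^ (b/ζ) :=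
        Real.rpow_le_rpow (by positivity) hwt hβ0.le
      have hr2 : (‖lam‖ / 2) ^ (b/ζ) = (‖lam‖) ^ (b/ζ) / (2:ℝ) ^ (b/ζ) :=
        Real.div_rpow ht0.le (by norm_num) _
      rw [hr2] at hr1
      have hεc : (0:ℝ) < ε * c := by positivity
      have := mul_le_mul_of_nonneg_left hr1 hεc.le
      rw [hK'def]
      have hK'eq : ε * c / (2:ℝ) ^ (b/ζ) * (‖lam‖) ^ (b/ζ)
          = ε * c * ((‖lam‖) ^ (b/ζ) / (2:ℝ) ^ (b/ζ)) := by ring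
      nlinarith [this]
    have hG : Tendsto (fun lam : ℂ => -ε * ‖(a:ℂ) - lam‖ ^ (b/ζ) * c +
        ‖z‖ * ‖lam‖ ^ (1/ζ)) l atBot :=
      tendsto_atBot_mono' l hev hHcomp
    have hfin := (Real.tendsto_exp_atBot.comp hG).const_mul (3 * (⌈1/ζ⌉₊ : ℝ))
    simpa using hfin
end

section
/- Let X be a Banach space, ω ∈ ℕ₀, l ∈ ℕ₀, and let x ∈ X. Let Γ be the upwards oriented boundary of {λ ∈ Σ_φ : |λ| ≥ r} for some φ ∈ (π/2, π) and r > 0, and let a > r, b > 1 be such that Re((a−λ)^{b}) ≥ c|a−λ|^{b} > 0 on and to the left of Γ for some c > 0. Then lim_{ε→0+} (1/(2πi)) ∫_Γ e^{−ε(a−λ)^{b}} λ^{l−1−ω} dλ · x = δ_{ωl} x, where δ_{ωl} is the Kronecker delta. -/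
open Real Complex MeasureTheory Filter Set Asymptotics intervalIntegral

private noncomputable def FF (a b : ℝ) (k : ℤ) (ε : ℝ) (lam : ℂ) : ℂ :=
  Complex.exp (-(ε:ℂ) * ((a:ℂ) - lam) ^ ((b:ℝ):ℂ)) * lam ^ k

private lemma aux_arg (s θ : ℝ) (hs : 0 < s) (hθ : θ ∈ Set.Ioc (-π) π) :
    Complex.arg ((s:ℂ) * Complex.exp ((θ:ℂ) * Complex.I)) = θ := by
  rw [Complex.exp_mul_I, Complex.arg_real_mul _ hs]
  exact Complex.arg_cos_add_sin_mul_I hθ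

private lemma aux_abs_E (s θ : ℝ) (hs : 0 ≤ s) :
    ‖(s:ℂ) * Complex.exp ((θ:ℂ) * Complex.I)‖ = s := by
  simp [Complex.norm_exp, _root_.abs_of_nonneg hs]

private lemma aux_tendsto_zero (s η b' a' : ℝ) (hη : 0 < η) (hb : 1 < b') :
    Tendsto (fun R : ℝ => R ^ s * Real.exp (-η * (R - a') ^ b')) atTop (nhds 0) := by
  have h2 : (0:ℝ) < η / 2 ^ b' := by
    have : (0:ℝ) < (2:ℝ) ^ b' := Real.rpow_pos_of_pos (by norm_num) _
    positivity
  have h1 := rpow_mul_exp_neg_mul_rpow_isLittleO_exp_neg s hb h2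
  have h0 : Tendsto (fun x : ℝ => Real.exp (-(1/2) * x)) atTop (nhds 0) :=
    Real.tendsto_exp_atBot.comp (tendsto_id.const_mul_atTop_of_neg (by norm_num))
  have h3 : Tendsto (fun R : ℝ => R ^ s * Real.exp (-(η / 2 ^ b') * R ^ b')) atTop (nhds 0) :=
    h1.isBigO.trans_tendsto h0
  apply squeeze_zero_norm' _ h3
  filter_upwards [eventually_ge_atTop (1:ℝ), eventually_ge_atTop (2*a')] with R hR1 hR2
  have hR0 : (0:ℝ) < R := lt_of_lt_of_le one_pos hR1
  have hnn : (0:ℝ) ≤ R ^ s * Real.exp (-η * (R - a') ^ b') := by positivity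
  rw [Real.norm_eq_abs, _root_.abs_of_nonneg hnn]
  have key : Real.exp (-η * (R - a') ^ b') ≤ Real.exp (-(η / 2 ^ b') * R ^ b') := by
    rw [Real.exp_le_exp]
    have h4 : (R/2) ^ b' ≤ (R - a') ^ b' :=
      Real.rpow_le_rpow (by linarith) (by linarith) (by linarith)
    have h5 : (R/2) ^ b' = R ^ b' / 2 ^ b' := Real.div_rpow (by linarith) (by norm_num) b'
    have h6 : η / 2 ^ b' * R ^ b' = η * (R/2)^b' := by rw [h5]; ring
    have h7 : η / 2 ^ b' * R ^ b' ≤ η * (R - a')^b' := by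
      rw [h6]; exact mul_le_mul_of_nonneg_left h4 hη.le
    linarith
  exact mul_le_mul_of_nonneg_left key (by positivity)

private lemma aux_re_ray (a s θ : ℝ) (ha : 0 < a) (hs : 0 ≤ s) (hθ : Real.cos θ ≤ 0) :
    0 < ((a:ℂ) - (s:ℂ) * Complex.exp ((θ:ℂ) * Complex.I)).re := by
  have hre : ((a:ℂ) - (s:ℂ) * Complex.exp ((θ:ℂ) * Complex.I)).re = a - s * Real.cos θ := by
    simp [Complex.exp_mul_I, Complex.cos_ofReal_re, Complex.sin_ofReal_re]
  rw [hre]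
  nlinarith [mul_nonneg hs (neg_nonneg.2 hθ)]

private lemma aux_re_circ (a s θ : ℝ) (h : s < a) (hs : 0 ≤ s) :
    0 < ((a:ℂ) - (s:ℂ) * Complex.exp ((θ:ℂ) * Complex.I)).re := by
  have hre : ((a:ℂ) - (s:ℂ) * Complex.exp ((θ:ℂ) * Complex.I)).re = a - s * Real.cos θ := by
    simp [Complex.exp_mul_I, Complex.cos_ofReal_re, Complex.sin_ofReal_re]
  rw [hre]
  nlinarith [Real.cos_le_one θ, Real.neg_one_le_cos θ]

private lemma aux_abs_ray (a s θ : ℝ) (ha : 0 ≤ a) (hs : 0 ≤ s) (hθ : Real.cos θ ≤ 0) :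
    s ≤ ‖(a:ℂ) - (s:ℂ) * Complex.exp ((θ:ℂ) * Complex.I)‖ := by
  have hre : ((a:ℂ) - (s:ℂ) * Complex.exp ((θ:ℂ) * Complex.I)).re = a - s * Real.cos θ := by
    simp [Complex.exp_mul_I, Complex.cos_ofReal_re, Complex.sin_ofReal_re]
  have him : ((a:ℂ) - (s:ℂ) * Complex.exp ((θ:ℂ) * Complex.I)).im = -(s * Real.sin θ) := by
    simp [Complex.exp_mul_I, Complex.cos_ofReal_re, Complex.sin_ofReal_re]
  rw [Complex.norm_def, Complex.normSq_apply, hre, him]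
  apply Real.le_sqrt_of_sq_le
  nlinarith [Real.sin_sq_add_cos_sq θ, mul_nonneg (mul_nonneg ha hs) (neg_nonneg.2 hθ)]

private lemma aux_norm_exp (ε t : ℝ) (z : ℂ) (hε : 0 ≤ ε) (ht : t ≤ z.re) :
    ‖Complex.exp (-(ε:ℂ) * z)‖ ≤ Real.exp (-(ε * t)) := by
  rw [Complex.norm_exp]
  apply Real.exp_le_exp.2
  have h : (-(ε:ℂ) * z).re = -(ε * z.re) := by simp
  rw [h]
  have := mul_le_mul_of_nonneg_left ht hε
  linarith

private lemma aux_diff (a b : ℝ) (k : ℤ) (ε : ℝ) (lam : ℂ) (h0 : lam ≠ 0)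
    (hs : 0 < ((a:ℂ) - lam).re) : DifferentiableAt ℂ (FF a b k ε) lam := by
  have h1 : DifferentiableAt ℂ (fun lam : ℂ => ((a:ℂ) - lam) ^ ((b:ℝ):ℂ)) lam :=
    DifferentiableAt.cpow ((differentiableAt_const _).sub differentiableAt_id)
      (differentiableAt_const _) (Complex.mem_slitPlane_iff.2 (Or.inl hs))
  exact ((h1.const_mul _).cexp.mul (differentiableAt_zpow.2 (Or.inl h0)))

private lemma aux_cont (a b : ℝ) (k : ℤ) (ε : ℝ) (E : ℂ) (hE : E ≠ 0)
    (hre : ∀ s : ℝ, 0 < s → 0 < ((a:ℂ) - (s:ℂ) * E).re) :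
    ContinuousOn (fun s : ℝ => FF a b k ε ((s:ℂ) * E) * E) {s : ℝ | 0 < s} := by
  intro s hs
  have h0 : (s:ℂ) * E ≠ 0 := by
    apply mul_ne_zero _ hE
    exact_mod_cast (ne_of_gt hs)
  have hd := aux_diff a b k ε ((s:ℂ) * E) h0 (hre s hs)
  have hmul : ContinuousAt (fun s : ℝ => (s:ℂ) * E) s :=
    (Complex.continuous_ofReal.mul continuous_const).continuousAt
  have hc : ContinuousAt ((FF a b k ε) ∘ (fun s : ℝ => (s:ℂ) * E)) s :=
    ContinuousAt.comp (x := s) hd.continuousAt hmul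
  exact (hc.mul continuousAt_const).continuousWithinAt

private lemma aux_rect (a b : ℝ) (k : ℤ) (ε r R α β : ℝ) (hr : 0 < r) (hrR : r ≤ R)
    (hαβ : α ≤ β) (hcos : ∀ y ∈ Set.Icc α β, Real.cos y ≤ 0) (ha : 0 < a) :
    (∫ s in r..R, FF a b k ε ((s:ℂ) * Complex.exp ((α:ℂ)*Complex.I)) * Complex.exp ((α:ℂ)*Complex.I))
      - (∫ s in r..R, FF a b k ε ((s:ℂ) * Complex.exp ((β:ℂ)*Complex.I)) * Complex.exp ((β:ℂ)*Complex.I))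
      + Complex.I • (∫ y in α..β, FF a b k ε ((R:ℂ) * Complex.exp ((y:ℂ)*Complex.I)) * ((R:ℂ) * Complex.exp ((y:ℂ)*Complex.I)))
      - Complex.I • (∫ y in α..β, FF a b k ε ((r:ℂ) * Complex.exp ((y:ℂ)*Complex.I)) * ((r:ℂ) * Complex.exp ((y:ℂ)*Complex.I))) = 0 := by
  have hR : 0 < R := lt_of_lt_of_le hr hrR
  set g : ℂ → ℂ := fun z => FF a b k ε (Complex.exp z) * Complex.exp z with hgdef
  have hlog : Real.log r ≤ Real.log R := Real.log_le_log hr hrR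
  have hrepos : ∀ z : ℂ, Real.cos z.im ≤ 0 → 0 < ((a:ℂ) - Complex.exp z).re := by
    intro z hz
    have h1 : (Complex.exp z).re = Real.exp z.re * Real.cos z.im := Complex.exp_re z
    have h2 : Real.exp z.re * Real.cos z.im ≤ 0 :=
      mul_nonpos_of_nonneg_of_nonpos (Real.exp_pos _).le hz
    simp only [Complex.sub_re, Complex.ofReal_re, h1]
    linarith
  have hdiff : DifferentiableOn ℂ g
      (Set.uIcc (Real.log r) (Real.log R) ×ℂ Set.uIcc α β) := by
    intro z hz
    rw [Complex.mem_reProdIm, Set.uIcc_of_le hαβ] at hz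
    have hcz : Real.cos z.im ≤ 0 := hcos z.im hz.2
    exact (((aux_diff a b k ε (Complex.exp z) (Complex.exp_ne_zero z)
      (hrepos z hcz)).comp z (Complex.differentiable_exp z)).mul
      (Complex.differentiable_exp z)).differentiableWithinAt
  have hrect := Complex.integral_boundary_rect_eq_zero_of_differentiableOn g
      ⟨Real.log r, α⟩ ⟨Real.log R, β⟩ hdiff
  have hexp : ∀ (x y : ℝ), Complex.exp ((x:ℂ) + (y:ℂ) * Complex.I)
      = (Real.exp x : ℂ) * Complex.exp ((y:ℂ) * Complex.I) := by
    intro x y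
    rw [Complex.exp_add, Complex.ofReal_exp]
  have hsub : ∀ y : ℝ, Real.cos y ≤ 0 →
      (∫ x in Real.log r..Real.log R, g ((x:ℂ) + (y:ℂ) * Complex.I))
        = ∫ s in r..R, FF a b k ε ((s:ℂ) * Complex.exp ((y:ℂ)*Complex.I)) * Complex.exp ((y:ℂ)*Complex.I) := by
    intro y hy
    set E : ℂ := Complex.exp ((y:ℂ) * Complex.I) with hE
    have h1 : (∫ x in Real.log r..Real.log R, g ((x:ℂ) + (y:ℂ) * Complex.I))
        = ∫ x in Real.log r..Real.log R,
            Real.exp x • ((fun s : ℝ => FF a b k ε ((s:ℂ) * E) * E) ∘ Real.exp) x := by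
      apply intervalIntegral.integral_congr
      intro x _
      simp only [hgdef, Function.comp_apply, hexp x y]
      rw [Complex.real_smul, Complex.ofReal_exp]
      ring
    rw [h1, intervalIntegral.integral_comp_smul_deriv' (fun x _ => Real.hasDerivAt_exp x)
      Real.continuousOn_exp ((aux_cont a b k ε E (Complex.exp_ne_zero _)
        (fun s hs => by
          have hEre : E.re = Real.cos y := by rw [hE, Complex.exp_re]; simp
          have h2 : ((a:ℂ) - (s:ℂ) * E).re = a - s * Real.cos y := by
            simp [Complex.sub_re, Complex.mul_re, hEre]
          rw [h2]
          nlinarith [mul_nonneg hs.le (neg_nonneg.2 hy)])).mono ?_),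
      Real.exp_log hr, Real.exp_log hR]
    · intro u hu
      rcases hu with ⟨x, hx, rfl⟩
      exact Real.exp_pos x
  have hver : ∀ ρ : ℝ, 0 < ρ →
      (∫ y in α..β, g ((Real.log ρ : ℂ) + (y:ℂ) * Complex.I))
        = ∫ y in α..β, FF a b k ε ((ρ:ℂ) * Complex.exp ((y:ℂ)*Complex.I))
            * ((ρ:ℂ) * Complex.exp ((y:ℂ)*Complex.I)) := by
    intro ρ hρ
    apply intervalIntegral.integral_congr
    intro y _
    simp only [hgdef]
    rw [hexp, Real.exp_log hρ]
  have hrect' : (∫ x in Real.log r..Real.log R, g ((x:ℂ) + (α:ℂ) * Complex.I))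
      - (∫ x in Real.log r..Real.log R, g ((x:ℂ) + (β:ℂ) * Complex.I))
      + Complex.I • (∫ y in α..β, g ((Real.log R : ℂ) + (y:ℂ) * Complex.I))
      - Complex.I • (∫ y in α..β, g ((Real.log r : ℂ) + (y:ℂ) * Complex.I)) = 0 := hrect
  rw [hsub α (hcos α ⟨le_refl α, hαβ⟩), hsub β (hcos β ⟨hαβ, le_refl β⟩),
    hver r hr, hver R hR] at hrect'
  exact hrect'

/-- Contour-integral limit producing the Kronecker delta: with `Γ` the upwards
oriented boundary of `{λ ∈ Σ_φ : |λ| ≥ r}` (two rays `s e^{±iφ}`, `s ≥ r`, and the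
arc `r e^{iθ}`, `|θ| ≤ φ`), `φ ∈ (π/2, π)`, `r > 0`, `a > r`, `b > 1`, and
`Re((a−λ)^b) ≥ c|a−λ|^b > 0` on and to the left of `Γ`, one has
`lim_{ε→0+} (1/(2πi)) ∫_Γ e^{−ε(a−λ)^b} λ^{l−1−ω} dλ · x = δ_{ωl} x`. -/
theorem contour_kronecker_delta_limit {X : Type*} [NormedAddCommGroup X]
    [NormedSpace ℂ X] [CompleteSpace X] (ω l : ℕ) (x : X)
    (φ r a b c : ℝ) (hφ1 : π / 2 < φ) (hφ2 : φ < π) (hr : 0 < r) (ha : r < a)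
    (hb : 1 < b) (hc : 0 < c)
    (hleft : ∀ lam : ℂ, (‖lam‖ ≤ r ∨ φ ≤ |Complex.arg lam|) →
      c * ‖(a : ℂ) - lam‖ ^ b ≤ (((a : ℂ) - lam) ^ ((b : ℝ) : ℂ)).re ∧
      0 < c * ‖(a : ℂ) - lam‖ ^ b) :
    Tendsto (fun ε : ℝ =>
        ((1 / (2 * (π : ℂ) * Complex.I)) *
          ((∫ s in Set.Ioi r,
              (Complex.exp (-(ε : ℂ) * ((a : ℂ) - (s : ℂ) * Complex.exp ((φ : ℂ) * Complex.I)) ^ ((b : ℝ) : ℂ)) *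
                 ((s : ℂ) * Complex.exp ((φ : ℂ) * Complex.I)) ^ ((l : ℤ) - 1 - (ω : ℤ)) *
                 Complex.exp ((φ : ℂ) * Complex.I) -
               Complex.exp (-(ε : ℂ) * ((a : ℂ) - (s : ℂ) * Complex.exp (-(φ : ℂ) * Complex.I)) ^ ((b : ℝ) : ℂ)) *
                 ((s : ℂ) * Complex.exp (-(φ : ℂ) * Complex.I)) ^ ((l : ℤ) - 1 - (ω : ℤ)) *
                 Complex.exp (-(φ : ℂ) * Complex.I))) +
           ∫ θ in (-φ)..φ,
              Complex.exp (-(ε : ℂ) * ((a : ℂ) - (r : ℂ) * Complex.exp ((θ : ℂ) * Complex.I)) ^ ((b : ℝ) : ℂ)) *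
                ((r : ℂ) * Complex.exp ((θ : ℂ) * Complex.I)) ^ ((l : ℤ) - 1 - (ω : ℤ)) *
                (Complex.I * (r : ℂ) * Complex.exp ((θ : ℂ) * Complex.I)))) • x)
      (nhdsWithin 0 (Set.Ioi (0 : ℝ)))
      (nhds (if ω = l then x else 0)) := by
  have hπ : (0:ℝ) < π := Real.pi_pos
  have hφ0 : 0 < φ := lt_trans (by positivity) hφ1
  have ha0 : 0 < a := lt_trans hr ha
  set k : ℤ := (l:ℤ) - 1 - (ω:ℤ) with hkdef
  have habsE : ∀ θ:ℝ, ‖Complex.exp ((θ:ℂ)*Complex.I)‖ = 1 := fun θ => by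
    simpa using aux_abs_E 1 θ zero_le_one
  have hcont_circ : ∀ ε : ℝ, Continuous (fun θ : ℝ =>
      FF a b k ε ((r:ℂ) * Complex.exp ((θ:ℂ)*Complex.I))
        * (Complex.I * (r:ℂ) * Complex.exp ((θ:ℂ)*Complex.I))) := by
    intro ε
    rw [continuous_iff_continuousAt]
    intro θ
    have h0 : (r:ℂ) * Complex.exp ((θ:ℂ)*Complex.I) ≠ 0 :=
      mul_ne_zero (by exact_mod_cast hr.ne') (Complex.exp_ne_zero _)
    have hd := aux_diff a b k ε _ h0 (aux_re_circ a r θ ha hr.le)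
    have hmul : ContinuousAt (fun θ : ℝ => (r:ℂ) * Complex.exp ((θ:ℂ)*Complex.I)) θ :=
      (continuous_const.mul ((Complex.continuous_ofReal.mul continuous_const).cexp)).continuousAt
    exact (ContinuousAt.comp (x := θ) hd.continuousAt hmul).mul
      (continuous_const.mul ((Complex.continuous_ofReal.mul continuous_const).cexp)).continuousAt
  -- step A : contour deformation for each ε > 0
  have stepA : ∀ ε : ℝ, 0 < ε →
      (∫ s in Set.Ioi r,
          (FF a b k ε ((s:ℂ) * Complex.exp ((φ:ℂ)*Complex.I)) * Complex.exp ((φ:ℂ)*Complex.I)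
            - FF a b k ε ((s:ℂ) * Complex.exp (((-φ:ℝ):ℂ)*Complex.I)) * Complex.exp (((-φ:ℝ):ℂ)*Complex.I)))
        + (∫ θ in (-φ)..φ, FF a b k ε ((r:ℂ) * Complex.exp ((θ:ℂ)*Complex.I))
            * (Complex.I * (r:ℂ) * Complex.exp ((θ:ℂ)*Complex.I)))
      = ∫ θ in (-π)..π, FF a b k ε ((r:ℂ) * Complex.exp ((θ:ℂ)*Complex.I))
          * (Complex.I * (r:ℂ) * Complex.exp ((θ:ℂ)*Complex.I)) := by
    intro ε hε
    have hcosφ : Real.cos φ ≤ 0 :=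
      Real.cos_nonpos_of_pi_div_two_le_of_le hφ1.le (by linarith)
    have hcosIcc : ∀ y ∈ Set.Icc φ π, Real.cos y ≤ 0 := fun y hy =>
      Real.cos_nonpos_of_pi_div_two_le_of_le (le_trans hφ1.le hy.1) (by linarith [hy.2])
    have hcosIcc' : ∀ y ∈ Set.Icc (-π) (-φ), Real.cos y ≤ 0 := fun y hy => by
      rw [← Real.cos_neg]
      exact hcosIcc (-y) ⟨by linarith [hy.2], by linarith [hy.1]⟩
    have hcosnegφ : Real.cos (-φ) ≤ 0 := by rw [Real.cos_neg]; exact hcosφ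
    -- generic norm bound for FF
    have hFFb : ∀ (lam : ℂ) (t : ℝ), 0 ≤ t → t ≤ ‖(a:ℂ) - lam‖ →
        (‖lam‖ ≤ r ∨ φ ≤ |Complex.arg lam|) →
        ‖FF a b k ε lam‖ ≤ ‖lam‖ ^ k * Real.exp (-(ε*c) * t ^ b) := by
      intro lam t ht hta hdisj
      have h1 := (hleft lam hdisj).1
      have htb : t ^ b ≤ ‖(a:ℂ) - lam‖ ^ b :=
        Real.rpow_le_rpow ht hta (by linarith)
      have h2 : (ε * c) * t ^ b ≤ ε * (c * ‖(a:ℂ) - lam‖ ^ b) := by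
        rw [mul_assoc]
        exact mul_le_mul_of_nonneg_left (mul_le_mul_of_nonneg_left htb hc.le) hε.le
      rw [FF, norm_mul, norm_zpow]
      calc ‖Complex.exp (-(ε:ℂ) * ((a:ℂ) - lam) ^ ((b:ℝ):ℂ))‖ * ‖lam‖ ^ k
          ≤ Real.exp (-(ε * (c * ‖(a:ℂ)-lam‖^b))) * ‖lam‖ ^ k :=
            mul_le_mul_of_nonneg_right (aux_norm_exp ε _ _ hε.le h1)
              (zpow_nonneg (norm_nonneg _) k)
        _ ≤ Real.exp (-((ε*c) * t^b)) * ‖lam‖ ^ k := by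
            apply mul_le_mul_of_nonneg_right _ (zpow_nonneg (norm_nonneg _) k)
            exact Real.exp_le_exp.2 (by linarith)
        _ = ‖lam‖ ^ k * Real.exp (-(ε*c) * t^b) := by rw [neg_mul]; ring
    -- integrability of the ray integrands
    have hrayInt : ∀ θ : ℝ, θ ∈ Set.Ioc (-π) π → φ ≤ |θ| → Real.cos θ ≤ 0 →
        IntegrableOn (fun s : ℝ => FF a b k ε ((s:ℂ) * Complex.exp ((θ:ℂ)*Complex.I))
          * Complex.exp ((θ:ℂ)*Complex.I)) (Set.Ioi r) := by
      intro θ hθIoc hθφ hcosθ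
      have hbndInt : IntegrableOn (fun s : ℝ => s ^ ((k:ℝ)) * Real.exp (-(ε*c) * s ^ b))
          (Set.Ioi r) := by
        apply integrable_of_isBigO_exp_neg (by norm_num : (0:ℝ) < 1/2)
        · apply ContinuousOn.mul
          · exact ContinuousOn.rpow_const continuousOn_id
              (fun s hs => Or.inl (ne_of_gt (lt_of_lt_of_le hr hs)))
          · exact Real.continuous_exp.comp_continuousOn
              (continuousOn_const.mul (continuousOn_id.rpow_const
                (fun s hs => Or.inl (ne_of_gt (lt_of_lt_of_le hr hs)))))
        · exact (rpow_mul_exp_neg_mul_rpow_isLittleO_exp_neg (k:ℝ) hb (by positivity)).isBigO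
      apply Integrable.mono' hbndInt
      · apply ContinuousOn.aestronglyMeasurable _ measurableSet_Ioi
        exact (aux_cont a b k ε (Complex.exp ((θ:ℂ)*Complex.I)) (Complex.exp_ne_zero _)
          (fun s hs => aux_re_ray a s θ ha0 hs.le hcosθ)).mono (fun s hs => lt_trans hr hs)
      · filter_upwards [ae_restrict_mem measurableSet_Ioi] with s hs
        have hs0 : 0 < s := lt_trans hr hs
        have habs : ‖(s:ℂ) * Complex.exp ((θ:ℂ)*Complex.I)‖ = s :=
          aux_abs_E s θ hs0.le
        have harg : Complex.arg ((s:ℂ) * Complex.exp ((θ:ℂ)*Complex.I)) = θ :=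
          aux_arg s θ hs0 hθIoc
        have hb1 := hFFb ((s:ℂ) * Complex.exp ((θ:ℂ)*Complex.I)) s hs0.le
          (aux_abs_ray a s θ ha0.le hs0.le hcosθ) (Or.inr (by rw [harg]; exact hθφ))
        rw [habs] at hb1
        rw [← Real.rpow_intCast s k] at hb1
        rw [norm_mul, habsE θ, mul_one]
        exact hb1
      -- edge bound
    have hedge : ∀ (α β : ℝ), -π ≤ α → α ≤ β → β ≤ π → (∀ y, y ∈ Set.Ioc α β → φ ≤ |y|) →
        ∀ R : ℝ, a ≤ R →
        ‖∫ y in α..β, FF a b k ε ((R:ℂ) * Complex.exp ((y:ℂ)*Complex.I))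
            * ((R:ℂ) * Complex.exp ((y:ℂ)*Complex.I))‖
          ≤ (R ^ ((k:ℝ)) * R * Real.exp (-(ε*c) * (R - a)^b)) * |β - α| := by
      intro α β hα hαβ hβ hyφ R haR
      have hR0 : 0 < R := lt_of_lt_of_le ha0 haR
      apply intervalIntegral.norm_integral_le_of_norm_le_const
      intro y hy
      rw [Set.uIoc_of_le hαβ] at hy
      have habs : ‖(R:ℂ) * Complex.exp ((y:ℂ)*Complex.I)‖ = R :=
        aux_abs_E R y hR0.le
      have harg : Complex.arg ((R:ℂ) * Complex.exp ((y:ℂ)*Complex.I)) = y :=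
        aux_arg R y hR0 ⟨lt_of_le_of_lt hα hy.1, le_trans hy.2 hβ⟩
      have hta : R - a ≤ ‖(a:ℂ) - (R:ℂ) * Complex.exp ((y:ℂ)*Complex.I)‖ := by
        have h1 := norm_sub_norm_le ((R:ℂ) * Complex.exp ((y:ℂ)*Complex.I)) ((a:ℂ))
        rw [norm_sub_rev] at h1
        rw [habs, Complex.norm_real, Real.norm_eq_abs,
          _root_.abs_of_pos ha0] at h1
        exact h1
      have hb1 := hFFb ((R:ℂ) * Complex.exp ((y:ℂ)*Complex.I)) (R - a) (by linarith) hta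
        (Or.inr (by rw [harg]; exact hyφ y hy))
      rw [habs] at hb1
      rw [norm_mul, habs]
      calc ‖FF a b k ε ((R:ℂ) * Complex.exp ((y:ℂ)*Complex.I))‖ * R
          ≤ (R ^ k * Real.exp (-(ε*c)*(R-a)^b)) * R :=
            mul_le_mul_of_nonneg_right hb1 hR0.le
        _ = R ^ ((k:ℝ)) * R * Real.exp (-(ε*c)*(R-a)^b) := by
            rw [← Real.rpow_intCast R k]; ring
    -- the bound tends to zero
    have hbnd0 : Tendsto (fun R : ℝ => (R ^ ((k:ℝ)) * R * Real.exp (-(ε*c) * (R - a)^b)) * (2*π))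
        atTop (nhds 0) := by
      have h1 := (aux_tendsto_zero ((k:ℝ)+1) (ε*c) b a (by positivity) hb).mul_const (2*π)
      rw [zero_mul] at h1
      apply h1.congr'
      filter_upwards [eventually_gt_atTop (0:ℝ)] with R hR0
      rw [Real.rpow_add hR0, Real.rpow_one]
    -- edge integrals at radius R tend to zero
    have hedge1 : Tendsto (fun R : ℝ => ∫ y in φ..π,
        FF a b k ε ((R:ℂ) * Complex.exp ((y:ℂ)*Complex.I))
          * ((R:ℂ) * Complex.exp ((y:ℂ)*Complex.I))) atTop (nhds 0) := by
      apply squeeze_zero_norm' _ hbnd0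
      filter_upwards [eventually_ge_atTop a] with R haR
      have hR0 : 0 < R := lt_of_lt_of_le ha0 haR
      calc ‖∫ y in φ..π, FF a b k ε ((R:ℂ) * Complex.exp ((y:ℂ)*Complex.I))
            * ((R:ℂ) * Complex.exp ((y:ℂ)*Complex.I))‖
          ≤ (R ^ ((k:ℝ)) * R * Real.exp (-(ε*c) * (R - a)^b)) * |π - φ| :=
            hedge φ π (by linarith) hφ2.le le_rfl
              (fun y hy => by rw [_root_.abs_of_pos (lt_trans hφ0 hy.1)]; exact hy.1.le) R haR
        _ ≤ (R ^ ((k:ℝ)) * R * Real.exp (-(ε*c) * (R - a)^b)) * (2*π) := by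
            apply mul_le_mul_of_nonneg_left _ (by positivity)
            rw [_root_.abs_of_nonneg (by linarith)]
            linarith
    have hedge2 : Tendsto (fun R : ℝ => ∫ y in (-π)..(-φ),
        FF a b k ε ((R:ℂ) * Complex.exp ((y:ℂ)*Complex.I))
          * ((R:ℂ) * Complex.exp ((y:ℂ)*Complex.I))) atTop (nhds 0) := by
      apply squeeze_zero_norm' _ hbnd0
      filter_upwards [eventually_ge_atTop a] with R haR
      have hR0 : 0 < R := lt_of_lt_of_le ha0 haR
      calc ‖∫ y in (-π)..(-φ), FF a b k ε ((R:ℂ) * Complex.exp ((y:ℂ)*Complex.I))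
            * ((R:ℂ) * Complex.exp ((y:ℂ)*Complex.I))‖
          ≤ (R ^ ((k:ℝ)) * R * Real.exp (-(ε*c) * (R - a)^b)) * |(-φ) - (-π)| := by
            apply hedge (-π) (-φ) (by linarith) (by linarith) (by linarith) _ R haR
            intro y hy
            rw [_root_.abs_of_neg (by linarith [hy.2] : y < 0)]
            linarith [hy.2]
        _ ≤ (R ^ ((k:ℝ)) * R * Real.exp (-(ε*c) * (R - a)^b)) * (2*π) := by
            apply mul_le_mul_of_nonneg_left _ (by positivity)
            rw [_root_.abs_of_nonneg (by linarith)]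
            linarith
    -- identify the two exponentials at ±π
    have hEπ : Complex.exp (((-π:ℝ):ℂ)*Complex.I) = Complex.exp (((π:ℝ):ℂ)*Complex.I) := by
      push_cast
      rw [neg_mul, Complex.exp_neg, Complex.exp_pi_mul_I]
      norm_num
    -- rectangle identities, eventually in R
    have hEqR : ∀ᶠ R in atTop,
        (∫ s in r..R, FF a b k ε ((s:ℂ) * Complex.exp ((φ:ℂ)*Complex.I)) * Complex.exp ((φ:ℂ)*Complex.I))
          - (∫ s in r..R, FF a b k ε ((s:ℂ) * Complex.exp (((-φ:ℝ):ℂ)*Complex.I)) * Complex.exp (((-φ:ℝ):ℂ)*Complex.I))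
        = (Complex.I * ∫ y in φ..π, FF a b k ε ((r:ℂ) * Complex.exp ((y:ℂ)*Complex.I)) * ((r:ℂ) * Complex.exp ((y:ℂ)*Complex.I)))
          + (Complex.I * ∫ y in (-π)..(-φ), FF a b k ε ((r:ℂ) * Complex.exp ((y:ℂ)*Complex.I)) * ((r:ℂ) * Complex.exp ((y:ℂ)*Complex.I)))
          - (Complex.I * ∫ y in φ..π, FF a b k ε ((R:ℂ) * Complex.exp ((y:ℂ)*Complex.I)) * ((R:ℂ) * Complex.exp ((y:ℂ)*Complex.I)))
          - (Complex.I * ∫ y in (-π)..(-φ), FF a b k ε ((R:ℂ) * Complex.exp ((y:ℂ)*Complex.I)) * ((R:ℂ) * Complex.exp ((y:ℂ)*Complex.I))) := by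
      filter_upwards [eventually_ge_atTop r] with R hrR
      have hU := aux_rect a b k ε r R φ π hr hrR hφ2.le hcosIcc ha0
      have hL := aux_rect a b k ε r R (-π) (-φ) hr hrR (by linarith) hcosIcc' ha0
      rw [hEπ] at hL
      simp only [smul_eq_mul] at hU hL
      linear_combination hU + hL
    -- limits as R → ∞
    have hIφ := hrayInt φ ⟨by linarith, hφ2.le⟩ (le_of_eq (_root_.abs_of_pos hφ0).symm) hcosφ
    have hInegφ := hrayInt (-φ) ⟨by linarith, by linarith⟩
      (by rw [abs_neg, _root_.abs_of_pos hφ0]) hcosnegφ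
    have hlim1 : Tendsto (fun R : ℝ =>
        (∫ s in r..R, FF a b k ε ((s:ℂ) * Complex.exp ((φ:ℂ)*Complex.I)) * Complex.exp ((φ:ℂ)*Complex.I))
          - (∫ s in r..R, FF a b k ε ((s:ℂ) * Complex.exp (((-φ:ℝ):ℂ)*Complex.I)) * Complex.exp (((-φ:ℝ):ℂ)*Complex.I)))
        atTop (nhds ((∫ s in Set.Ioi r, FF a b k ε ((s:ℂ) * Complex.exp ((φ:ℂ)*Complex.I)) * Complex.exp ((φ:ℂ)*Complex.I))
          - (∫ s in Set.Ioi r, FF a b k ε ((s:ℂ) * Complex.exp (((-φ:ℝ):ℂ)*Complex.I)) * Complex.exp (((-φ:ℝ):ℂ)*Complex.I)))) :=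
      (intervalIntegral_tendsto_integral_Ioi r hIφ tendsto_id).sub
        (intervalIntegral_tendsto_integral_Ioi r hInegφ tendsto_id)
    have hlim2 : Tendsto (fun R : ℝ =>
        (∫ s in r..R, FF a b k ε ((s:ℂ) * Complex.exp ((φ:ℂ)*Complex.I)) * Complex.exp ((φ:ℂ)*Complex.I))
          - (∫ s in r..R, FF a b k ε ((s:ℂ) * Complex.exp (((-φ:ℝ):ℂ)*Complex.I)) * Complex.exp (((-φ:ℝ):ℂ)*Complex.I)))
        atTop (nhds ((Complex.I * ∫ y in φ..π, FF a b k ε ((r:ℂ) * Complex.exp ((y:ℂ)*Complex.I)) * ((r:ℂ) * Complex.exp ((y:ℂ)*Complex.I)))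
          + (Complex.I * ∫ y in (-π)..(-φ), FF a b k ε ((r:ℂ) * Complex.exp ((y:ℂ)*Complex.I)) * ((r:ℂ) * Complex.exp ((y:ℂ)*Complex.I)))
          - Complex.I * 0 - Complex.I * 0)) := by
      apply Tendsto.congr' (hEqR.mono fun R h => h.symm)
      exact ((tendsto_const_nhds.add tendsto_const_nhds).sub
        (hedge1.const_mul Complex.I)).sub (hedge2.const_mul Complex.I)
    have huniq := tendsto_nhds_unique hlim1 hlim2
    -- assemble
    rw [MeasureTheory.integral_sub hIφ hInegφ, huniq]
    have hIC : ∀ (α β : ℝ),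
        Complex.I * (∫ y in α..β, FF a b k ε ((r:ℂ) * Complex.exp ((y:ℂ)*Complex.I))
          * ((r:ℂ) * Complex.exp ((y:ℂ)*Complex.I)))
        = ∫ y in α..β, FF a b k ε ((r:ℂ) * Complex.exp ((y:ℂ)*Complex.I))
            * (Complex.I * (r:ℂ) * Complex.exp ((y:ℂ)*Complex.I)) := by
      intro α β
      rw [← intervalIntegral.integral_const_mul]
      apply intervalIntegral.integral_congr
      intro y _
      ring
    rw [hIC, hIC]
    have hii : ∀ (α β : ℝ), IntervalIntegrable (fun θ : ℝ =>
        FF a b k ε ((r:ℂ) * Complex.exp ((θ:ℂ)*Complex.I))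
          * (Complex.I * (r:ℂ) * Complex.exp ((θ:ℂ)*Complex.I))) volume α β :=
      fun α β => (hcont_circ ε).intervalIntegrable α β
    have hadd1 := intervalIntegral.integral_add_adjacent_intervals (hii (-π) (-φ)) (hii (-φ) φ)
    have hadd2 := intervalIntegral.integral_add_adjacent_intervals
      ((hii (-π) (-φ)).trans (hii (-φ) φ)) (hii φ π)
    rw [mul_zero, sub_zero, sub_zero]
    linear_combination hadd1 + hadd2
  -- step B : limit of the circle integral
  have stepB : Tendsto (fun ε : ℝ => ∫ θ in (-π)..π,
      FF a b k ε ((r:ℂ) * Complex.exp ((θ:ℂ)*Complex.I))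
        * (Complex.I * (r:ℂ) * Complex.exp ((θ:ℂ)*Complex.I)))
      (nhdsWithin 0 (Set.Ioi (0:ℝ)))
      (nhds (if k = -1 then 2*(π:ℂ)*Complex.I else 0)) := by
    have hDCT := intervalIntegral.tendsto_integral_filter_of_dominated_convergence
      (μ := volume) (a := -π) (b := π) (l := nhdsWithin 0 (Set.Ioi (0:ℝ)))
      (F := fun (ε : ℝ) (θ : ℝ) => FF a b k ε ((r:ℂ) * Complex.exp ((θ:ℂ)*Complex.I))
          * (Complex.I * (r:ℂ) * Complex.exp ((θ:ℂ)*Complex.I)))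
      (f := fun θ : ℝ => ((r:ℂ) * Complex.exp ((θ:ℂ)*Complex.I)) ^ k
          * (Complex.I * (r:ℂ) * Complex.exp ((θ:ℂ)*Complex.I)))
      (bound := fun _ => r ^ k * r) ?_ ?_ ?_ ?_
    · -- use hDCT and compute the limit integral
      have hrne : ((r:ℂ)) ≠ 0 := by exact_mod_cast hr.ne'
      have hrw : ∀ θ:ℝ, (((r:ℂ) * Complex.exp ((θ:ℂ)*Complex.I)) ^ k
          * (Complex.I * (r:ℂ) * Complex.exp ((θ:ℂ)*Complex.I)))
          = (Complex.I * (r:ℂ)^(k+1)) * Complex.exp ((((k+1:ℤ)):ℂ)*Complex.I*(θ:ℂ)) := by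
        intro θ
        rw [mul_zpow,
          show (((k+1:ℤ)):ℂ)*Complex.I*(θ:ℂ) = ((k+1:ℤ):ℂ)*((θ:ℂ)*Complex.I) by ring,
          Complex.exp_int_mul, zpow_add_one₀ hrne, zpow_add_one₀ (Complex.exp_ne_zero _)]
        ring
      have hcalc : (∫ θ in (-π)..π, ((r:ℂ) * Complex.exp ((θ:ℂ)*Complex.I)) ^ k
          * (Complex.I * (r:ℂ) * Complex.exp ((θ:ℂ)*Complex.I)))
          = (if k = -1 then 2*(π:ℂ)*Complex.I else 0) := by
        simp_rw [hrw]
        rw [intervalIntegral.integral_const_mul]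
        by_cases hk1 : k = -1
        · rw [if_pos hk1, hk1]
          norm_num
          push_cast
          ring
        · have hc' : (((k+1:ℤ)):ℂ)*Complex.I ≠ 0 :=
            mul_ne_zero (by exact_mod_cast (by omega : (k+1:ℤ) ≠ 0)) Complex.I_ne_zero
          rw [integral_exp_mul_complex hc']
          have e1 : Complex.exp ((((k+1:ℤ)):ℂ)*Complex.I*((π:ℝ):ℂ)) = (-1:ℂ)^(k+1) := by
            rw [show (((k+1:ℤ)):ℂ)*Complex.I*((π:ℝ):ℂ)
                = ((k+1:ℤ):ℂ)*(((π:ℝ):ℂ)*Complex.I) by ring,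
              Complex.exp_int_mul, Complex.exp_pi_mul_I]
          have e2 : Complex.exp ((((k+1:ℤ)):ℂ)*Complex.I*((-π:ℝ):ℂ)) = (-1:ℂ)^(k+1) := by
            rw [show (((k+1:ℤ)):ℂ)*Complex.I*((-π:ℝ):ℂ)
                = ((k+1:ℤ):ℂ)*(-(((π:ℝ):ℂ)*Complex.I)) by push_cast; ring,
              Complex.exp_int_mul, Complex.exp_neg, Complex.exp_pi_mul_I]
            norm_num
          rw [if_neg hk1, e1, e2, sub_self, zero_div, mul_zero]
      rw [← hcalc]
      exact hDCT
    · exact Eventually.of_forall fun ε => (hcont_circ ε).aestronglyMeasurable.restrict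
    · -- bound
      filter_upwards [self_mem_nhdsWithin] with ε hε
      apply ae_of_all
      intro θ _
      have hlam : ‖(r:ℂ) * Complex.exp ((θ:ℂ)*Complex.I)‖ = r := aux_abs_E r θ hr.le
      have hdisj := hleft ((r:ℂ) * Complex.exp ((θ:ℂ)*Complex.I)) (Or.inl (le_of_eq hlam))
      have hre0 : (0:ℝ) ≤ (((a:ℂ) - (r:ℂ) * Complex.exp ((θ:ℂ)*Complex.I)) ^ ((b:ℝ):ℂ)).re :=
        le_trans hdisj.2.le hdisj.1
      have hexp1 : ‖Complex.exp (-(ε:ℂ) *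
          ((a:ℂ) - (r:ℂ) * Complex.exp ((θ:ℂ)*Complex.I)) ^ ((b:ℝ):ℂ))‖ ≤ 1 := by
        simpa using aux_norm_exp ε 0 _ (le_of_lt hε) hre0
      rw [FF]
      rw [norm_mul, norm_mul,
        norm_zpow, hlam, norm_mul, norm_mul, Complex.norm_I, Complex.norm_real, Real.norm_eq_abs, habsE θ,
        _root_.abs_of_pos hr]
      have hrk : (0:ℝ) ≤ r ^ k := le_of_lt (zpow_pos hr k)
      calc ‖Complex.exp (-(ε:ℂ) *
            ((a:ℂ) - (r:ℂ) * Complex.exp ((θ:ℂ)*Complex.I)) ^ ((b:ℝ):ℂ))‖ * r ^ k * (1 * r * 1)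
          ≤ 1 * r ^ k * (1 * r * 1) := by gcongr
        _ = r ^ k * r := by ring
    · exact intervalIntegrable_const
    · -- pointwise limit
      apply ae_of_all
      intro θ _
      have h1 : Continuous (fun ε : ℝ => Complex.exp (-(ε:ℂ) *
          ((a:ℂ) - (r:ℂ) * Complex.exp ((θ:ℂ)*Complex.I)) ^ ((b:ℝ):ℂ))) :=
        ((Complex.continuous_ofReal.neg).mul continuous_const).cexp
      have h2 : Tendsto (fun ε : ℝ => Complex.exp (-(ε:ℂ) *
          ((a:ℂ) - (r:ℂ) * Complex.exp ((θ:ℂ)*Complex.I)) ^ ((b:ℝ):ℂ)))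
          (nhds 0) (nhds 1) := by simpa using h1.tendsto 0
      have h2' : Tendsto (fun ε : ℝ => Complex.exp (-(ε:ℂ) *
          ((a:ℂ) - (r:ℂ) * Complex.exp ((θ:ℂ)*Complex.I)) ^ ((b:ℝ):ℂ)))
          (nhdsWithin 0 (Set.Ioi (0:ℝ))) (nhds 1) := h2.mono_left nhdsWithin_le_nhds
      have h3 := (h2'.mul_const
        (((r:ℂ) * Complex.exp ((θ:ℂ)*Complex.I)) ^ k)).mul_const
        (Complex.I * (r:ℂ) * Complex.exp ((θ:ℂ)*Complex.I))
      simpa [FF, one_mul] using h3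
  -- assemble
  have hne : (2*(π:ℂ)*Complex.I) ≠ 0 := by
    simp [Real.pi_ne_zero, Complex.I_ne_zero]
  have hlim : Tendsto (fun ε : ℝ => ((1 / (2 * (π : ℂ) * Complex.I)) *
      (∫ θ in (-π)..π, FF a b k ε ((r:ℂ) * Complex.exp ((θ:ℂ)*Complex.I))
        * (Complex.I * (r:ℂ) * Complex.exp ((θ:ℂ)*Complex.I)))) • x)
      (nhdsWithin 0 (Set.Ioi (0:ℝ)))
      (nhds (((1 / (2 * (π : ℂ) * Complex.I)) *
        (if k = -1 then 2*(π:ℂ)*Complex.I else 0)) • x)) :=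
    (stepB.const_mul _).smul_const x
  have hval : ((1 / (2 * (π : ℂ) * Complex.I)) *
      (if k = -1 then 2*(π:ℂ)*Complex.I else 0)) • x = (if ω = l then x else 0) := by
    by_cases h : ω = l
    · subst h
      have hk : k = -1 := by rw [hkdef]; omega
      rw [hk, if_pos rfl, if_pos rfl, one_div, inv_mul_cancel₀ hne, one_smul]
    · have hk : k ≠ -1 := by
        rw [hkdef]; intro hcontra; apply h; omega
      rw [if_neg hk, if_neg h, mul_zero, zero_smul]
  rw [← hval]
  apply Tendsto.congr' _ hlim
  filter_upwards [self_mem_nhdsWithin] with ε hε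
  rw [← stepA ε hε]
  simp only [FF, Complex.ofReal_neg]
end
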